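/- Let (K,ν) be a valued field and ω a valuation transcendental extension of ν to K(x). Let ω̄ and ω̄′ be two common extensions of ω and ν̄ to K̄(x) with minimal pairs of definition (a,γ) and (a′,γ′) respectively, and let Q, Q′ ∈ K[x] be the minimal polynomials of a and a′ over K. Then γ = γ′, deg Q = deg Q′, and ωQ = ωQ′. -/

import Mathlib

/- ---------------------------------------------------------------------------
Common definitions for formalizing "Minimal pairs, minimal fields and
implicit constant fields" (Dutta).

Valuations are formalized additively, as `AddValuation F (WithTop Γ)` where
`Γ` is a linearly ordered abelian group; the value `⊤` plays the role of the
value `∞` of `0`.  The algebraic closure `K̄` of `K` is `AlgebraicClosure K`,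
the rational function field `K(x)` is `RatFunc K`, and a fixed algebraic
closure of `K̄(x)` (equivalently, of `K(x)`) is
`Lhat K := AlgebraicClosure (RatFunc (AlgebraicClosure K))`.
--------------------------------------------------------------------------- -/

noncomputable section

open Polynomial

namespace VT

/-- The canonical embedding of the rational function field `K(x)` into `K̄(x)`. -/
def liftRF (K : Type) [Field K] : RatFunc K →+* RatFunc (AlgebraicClosure K) :=
  RatFunc.mapRingHom (Polynomial.mapRingHom (algebraMap K (AlgebraicClosure K)))
    (by
      intro p hp
      simp only [Submonoid.mem_comap, Polynomial.coe_mapRingHom]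
      rw [mem_nonZeroDivisors_iff_ne_zero] at hp ⊢
      rw [Ne, Polynomial.map_eq_zero_iff (algebraMap K (AlgebraicClosure K)).injective]
      exact hp)

variable {K : Type} [Field K] {Γ : Type} [AddCommGroup Γ] [LinearOrder Γ] [IsOrderedAddMonoid Γ]

/-- `w` extends the valuation `v` along the field embedding `g`. -/
def Extends {A B : Type} [Field A] [Field B] (g : A →+* B)
    (v : AddValuation A (WithTop Γ)) (w : AddValuation B (WithTop Γ)) : Prop :=
  ∀ x, w (g x) = v x

/-- `W` is the monomial valuation `ν̄_{a,γ}` on `K̄(x)` attached to `a ∈ K̄` and `γ ∈ Γ`: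
on a polynomial `p = Σᵢ cᵢ (x-a)ⁱ` its value is `minᵢ (ν̄ cᵢ + iγ)`.  (A valuation on
`K̄(x)` is determined by its restriction to polynomials.)  In particular `W` extends
the valuation `ν̄ = vbar` of `K̄`. -/
def IsMonomialVal (vbar : AddValuation (AlgebraicClosure K) (WithTop Γ))
    (W : AddValuation (RatFunc (AlgebraicClosure K)) (WithTop Γ))
    (a : AlgebraicClosure K) (γ : Γ) : Prop :=
  ∀ p : Polynomial (AlgebraicClosure K),
    W (algebraMap (Polynomial (AlgebraicClosure K)) (RatFunc (AlgebraicClosure K)) p) =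
      (Finset.range (p.natDegree + 1)).inf
        (fun i => vbar ((Polynomial.taylor a p).coeff i) + i • (γ : WithTop Γ))

/-- The degree `[K(a):K]` of an element `a` of the algebraic closure of `K`. -/
def degOver (K : Type) [Field K] (a : AlgebraicClosure K) : ℕ := (minpoly K a).natDegree

/-- `(a,γ)` is a pair of definition for the valuation `ω` on `K(x)`:  some common
extension of `ω` and `ν̄ = vbar` to `K̄(x)` is the monomial valuation `ν̄_{a,γ}`. -/
def IsPairOfDef (vbar : AddValuation (AlgebraicClosure K) (WithTop Γ))
    (ω : AddValuation (RatFunc K) (WithTop Γ)) (a : AlgebraicClosure K) (γ : Γ) : Prop :=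
  ∃ W : AddValuation (RatFunc (AlgebraicClosure K)) (WithTop Γ),
    IsMonomialVal vbar W a γ ∧ Extends (liftRF K) ω W

/-- `(a,γ)` is a minimal pair of definition for `ω`. -/
def IsMinimalPairOfDef (vbar : AddValuation (AlgebraicClosure K) (WithTop Γ))
    (ω : AddValuation (RatFunc K) (WithTop Γ)) (a : AlgebraicClosure K) (γ : Γ) : Prop :=
  IsPairOfDef vbar ω a γ ∧
    ∀ b : AlgebraicClosure K, (γ : WithTop Γ) ≤ vbar (a - b) → degOver K a ≤ degOver K b

/-- `(a,γ)` is a pair of definition for the valuation `W` on `K̄(x)`, i.e. `W = ν̄_{a,γ}`,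
and it is minimal: `a` has least degree over `K` among all `b` with `ν̄(a-b) ≥ γ`. -/
def IsMinimalPairFor (vbar : AddValuation (AlgebraicClosure K) (WithTop Γ))
    (W : AddValuation (RatFunc (AlgebraicClosure K)) (WithTop Γ))
    (a : AlgebraicClosure K) (γ : Γ) : Prop :=
  IsMonomialVal vbar W a γ ∧
    ∀ b : AlgebraicClosure K, (γ : WithTop Γ) ≤ vbar (a - b) → degOver K a ≤ degOver K b

/-- The valued field extension `(F|B, w)` (along `φ`) is value transcendental:
the quotient of value groups `wF / w(B)` has rational rank one, i.e. there is a value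
which is not torsion modulo the value group of the base, and any two values are
`ℚ`-linearly dependent modulo the value group of the base.  (For the extensions of
valuations from `K` to `K(x)` considered in the paper, the second condition is
automatic, by the Abhyankar inequality.) -/
def IsValueTranscendental {B F : Type} [Field B] [Field F] (φ : B →+* F)
    (w : AddValuation F (WithTop Γ)) : Prop :=
  (∃ (f : F) (γf : Γ), f ≠ 0 ∧ w f = (γf : WithTop Γ) ∧
      ∀ n : ℤ, n ≠ 0 → ∀ c : B, c ≠ 0 → ((n • γf : Γ) : WithTop Γ) ≠ w (φ c)) ∧
  (∀ (f g : F) (γf γg : Γ), f ≠ 0 → g ≠ 0 → w f = (γf : WithTop Γ) → w g = (γg : WithTop Γ) →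
      ∃ m n : ℤ, ¬(m = 0 ∧ n = 0) ∧
        ∃ c : B, c ≠ 0 ∧ ((m • γf + n • γg : Γ) : WithTop Γ) = w (φ c))

/-- The residue of `u` (an element of the valuation ring of `(F,w)`) is transcendental
over the residue field of the subset `S ⊆ F`:  whenever a polynomial expression
`Σᵢ cᵢ uⁱ` with coefficients `cᵢ ∈ S` of value `≥ 0` has value `> 0`, all the
coefficients have value `> 0` (i.e. residue `0`). -/
def ResidueTransOver {F : Type} [Field F] (w : AddValuation F (WithTop Γ))
    (S : Set F) (u : F) : Prop :=
  ∀ (n : ℕ) (c : ℕ → F), (∀ i ∈ Finset.range (n + 1), c i ∈ S ∧ 0 ≤ w (c i)) →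
    0 < w (∑ i ∈ Finset.range (n + 1), c i * u ^ i) →
    ∀ i ∈ Finset.range (n + 1), 0 < w (c i)

/-- The valued field extension `(F|B, w)` (along `φ`) is residue transcendental:
the residue field extension has transcendence degree one, i.e. some residue is
transcendental over the residue field of the base.  (For the extensions of valuations
from `K` to `K(x)` considered in the paper, transcendence degree `≤ 1` is automatic,
by the Abhyankar inequality.) -/
def IsResidueTranscendental {B F : Type} [Field B] [Field F] (φ : B →+* F)
    (w : AddValuation F (WithTop Γ)) : Prop :=
  ∃ f : F, w f = 0 ∧ ResidueTransOver w (Set.range φ) f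

/-- The extension is valuation transcendental: value transcendental or residue
transcendental. -/
def IsValuationTranscendental {B F : Type} [Field B] [Field F] (φ : B →+* F)
    (w : AddValuation F (WithTop Γ)) : Prop :=
  IsValueTranscendental φ w ∨ IsResidueTranscendental φ w

/-- The value group of the subset `S ⊆ F` under `w`, as a subgroup of `Γ`:
the subgroup { w f | f ∈ S, f ≠ 0 }.  (For `S` a subfield this set is already a
subgroup, so taking the generated subgroup is harmless.) -/
def valueSubgroup {F : Type} [Field F] (w : AddValuation F (WithTop Γ)) (S : Set F) :
    AddSubgroup Γ :=
  AddSubgroup.closure {γ : Γ | ∃ f ∈ S, f ≠ 0 ∧ w f = (γ : WithTop Γ)}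

/-- The subsets `S₁, S₂` of the valued field `(F,w)` have the same residues, i.e. they
induce the same residue field inside the residue field of `(F,w)`. -/
def SameResidues {F : Type} [Field F] (w : AddValuation F (WithTop Γ))
    (S₁ S₂ : Set F) : Prop :=
  (∀ f ∈ S₁, 0 ≤ w f → ∃ g ∈ S₂, 0 ≤ w g ∧ 0 < w (f - g)) ∧
  (∀ g ∈ S₂, 0 ≤ w g → ∃ f ∈ S₁, 0 ≤ w f ∧ 0 < w (g - f))

/-- The residue field of `S₂` has degree `j` over the residue field of `S₁` (both viewed
inside the residue field of `(F,w)`): there are `j` elements of `S₂`, integral for `w`,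
whose residues form a basis of the residue field of `S₂` over that of `S₁`. -/
def ResidueDegreeIs {F : Type} [Field F] (w : AddValuation F (WithTop Γ))
    (S₁ S₂ : Set F) (j : ℕ) : Prop :=
  ∃ g : Fin j → F,
    (∀ i, g i ∈ S₂ ∧ 0 ≤ w (g i)) ∧
    (∀ h ∈ S₂, 0 ≤ w h →
      ∃ c : Fin j → F, (∀ i, c i ∈ S₁ ∧ 0 ≤ w (c i)) ∧ 0 < w (h - ∑ i, c i * g i)) ∧
    (∀ c : Fin j → F, (∀ i, c i ∈ S₁ ∧ 0 ≤ w (c i)) →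
      0 < w (∑ i, c i * g i) → ∀ i, 0 < w (c i))

/-- `κ` is the Krasner constant `kras(a,K) = max { ν̄(σa - τa) : σ, τ ∈ Gal(K̄|K), σa ≠ τa }`. -/
def IsKrasnerConstant (vbar : AddValuation (AlgebraicClosure K) (WithTop Γ))
    (a : AlgebraicClosure K) (κ : WithTop Γ) : Prop :=
  (∃ σ τ : AlgebraicClosure K ≃ₐ[K] AlgebraicClosure K, σ a ≠ τ a ∧ vbar (σ a - τ a) = κ) ∧
  (∀ σ τ : AlgebraicClosure K ≃ₐ[K] AlgebraicClosure K, σ a ≠ τ a → vbar (σ a - τ a) ≤ κ)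

/-- `y` is separable algebraic over the subfield `E` of `F`: it is the root of a nonzero
separable polynomial with coefficients in `E`. -/
def SepAlgOver {F : Type} [Field F] (E : Subfield F) (y : F) : Prop :=
  ∃ p : Polynomial F, p ≠ 0 ∧ (∀ i, p.coeff i ∈ E) ∧ p.Separable ∧ p.eval y = 0

/-- `y` is algebraic over the subfield `E` of `F`. -/
def AlgOver {F : Type} [Field F] (E : Subfield F) (y : F) : Prop :=
  ∃ p : Polynomial F, p ≠ 0 ∧ (∀ i, p.coeff i ∈ E) ∧ p.eval y = 0

/-- The henselization `E^h` of the subfield `E` of the algebraically closed valued field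
`(F,Ω)`, realized inside `F` as the decomposition field: the set of elements of `F`
separable algebraic over `E` and fixed by every automorphism of `F` over `E` which
preserves the valuation `Ω`. -/
def henselizationSet {F : Type} [Field F] (Ω : AddValuation F (WithTop Γ))
    (E : Subfield F) : Set F :=
  {y | SepAlgOver E y ∧
    ∀ σ : F ≃+* F, (∀ e ∈ E, σ e = e) → (∀ z, Ω (σ z) = Ω z) → σ y = y}

/-- A fixed algebraic closure of `K̄(x)`; it is also an algebraic closure of `K(x)`. -/
abbrev Lhat (K : Type) [Field K] : Type := AlgebraicClosure (RatFunc (AlgebraicClosure K))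

/-- The canonical embedding `K̄ → Lhat K`. -/
def toL (K : Type) [Field K] : AlgebraicClosure K →+* Lhat K :=
  (algebraMap (RatFunc (AlgebraicClosure K)) (Lhat K)).comp
    (algebraMap (AlgebraicClosure K) (RatFunc (AlgebraicClosure K)))

/-- The canonical embedding `K(x) → Lhat K`. -/
def kxToL (K : Type) [Field K] : RatFunc K →+* Lhat K :=
  (algebraMap (RatFunc (AlgebraicClosure K)) (Lhat K)).comp (liftRF K)

/-- The subfield `K(x)` of `Lhat K`. -/
def KxSub (K : Type) [Field K] : Subfield (Lhat K) := (kxToL K).fieldRange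

/-- The subfield `K` of `Lhat K`. -/
def KSub (K : Type) [Field K] : Subfield (Lhat K) :=
  ((toL K).comp (algebraMap K (AlgebraicClosure K))).fieldRange

/-- The subfield `K(a)` of `Lhat K`, for `a ∈ K̄`. -/
def KadjSub (K : Type) [Field K] (a : AlgebraicClosure K) : Subfield (Lhat K) :=
  Subfield.closure ((KSub K : Set (Lhat K)) ∪ {toL K a})

/-- The subfield `K(a,x)` of `Lhat K`, for `a ∈ K̄`. -/
def KaxSub (K : Type) [Field K] (a : AlgebraicClosure K) : Subfield (Lhat K) :=
  Subfield.closure ((KxSub K : Set (Lhat K)) ∪ {toL K a})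

/-- The implicit constant field `IC(K(x)|K,ω) = K̄ ∩ K(x)^h`, computed inside the fixed
algebraic closure `Lhat K` of `K(x)` with respect to the valuation `Ω` on it. -/
def ICset (K : Type) [Field K] {Γ : Type} [AddCommGroup Γ] [LinearOrder Γ] [IsOrderedAddMonoid Γ]
    (Ω : AddValuation (Lhat K) (WithTop Γ)) : Set (Lhat K) :=
  Set.range (toL K) ∩ henselizationSet Ω (KxSub K)

/-- `σ` belongs to the absolute inertia group of `(K,ν̄)`:
`ν̄(σc - c) > 0` for every `c` in the valuation ring of `K^sep`. -/
def InInertiaGroup (vbar : AddValuation (AlgebraicClosure K) (WithTop Γ))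
    (σ : AlgebraicClosure K ≃ₐ[K] AlgebraicClosure K) : Prop :=
  ∀ c : AlgebraicClosure K, (minpoly K c).Separable → 0 ≤ vbar c → 0 < vbar (σ c - c)

/-- `σ` belongs to the absolute ramification group of `(K,ν̄)`:
`ν̄(σc - c) > ν̄ c` for every `c ∈ K^sep`, `c ≠ 0`. -/
def InRamificationGroup (vbar : AddValuation (AlgebraicClosure K) (WithTop Γ))
    (σ : AlgebraicClosure K ≃ₐ[K] AlgebraicClosure K) : Prop :=
  ∀ c : AlgebraicClosure K, c ≠ 0 → (minpoly K c).Separable → vbar c < vbar (σ c - c)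

/-- The absolute inertia field `K^i` of `(K,ν̄)`, as a subset of `K̄`: the fixed field in
`K^sep` of the absolute inertia group. -/
def inertiaFieldSet (vbar : AddValuation (AlgebraicClosure K) (WithTop Γ)) :
    Set (AlgebraicClosure K) :=
  {c | (minpoly K c).Separable ∧
    ∀ σ : AlgebraicClosure K ≃ₐ[K] AlgebraicClosure K, InInertiaGroup vbar σ → σ c = c}

/-- The absolute ramification field `K^r` of `(K,ν̄)`, as a subset of `K̄`: the fixed field
in `K^sep` of the absolute ramification group. -/
def ramificationFieldSet (vbar : AddValuation (AlgebraicClosure K) (WithTop Γ)) :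
    Set (AlgebraicClosure K) :=
  {c | (minpoly K c).Separable ∧
    ∀ σ : AlgebraicClosure K ≃ₐ[K] AlgebraicClosure K, InRamificationGroup vbar σ → σ c = c}

/-- `(K,ν)` is henselian, i.e. `ν` extends uniquely to `K̄`; equivalently (all extensions
of `ν` to `K̄` being conjugate), the fixed extension `ν̄` is invariant under `Gal(K̄|K)`. -/
def IsHenselianBase (vbar : AddValuation (AlgebraicClosure K) (WithTop Γ)) : Prop :=
  ∀ σ : AlgebraicClosure K ≃ₐ[K] AlgebraicClosure K, ∀ c, vbar (σ c) = vbar c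

/-- `ν` admits a unique extension from `K` to `K(a)`; equivalently, all the conjugate
extensions agree on `K(a)`. -/
def UniqueExtensionOn (vbar : AddValuation (AlgebraicClosure K) (WithTop Γ))
    (a : AlgebraicClosure K) : Prop :=
  ∀ σ : AlgebraicClosure K ≃ₐ[K] AlgebraicClosure K,
    ∀ b ∈ IntermediateField.adjoin K {a}, vbar (σ b) = vbar b

/-- `succ` is a successor function for the linear order `ι`. -/
def IsSuccFn {ι : Type} [LinearOrder ι] (succ : ι → ι) : Prop :=
  ∀ μ, μ < succ μ ∧ ∀ ρ, μ < ρ → succ μ ≤ ρ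

/-- `z` is a pseudo-Cauchy sequence in `(F,v)`. -/
def IsPseudoCauchy {F ι : Type} [Field F] [LinearOrder ι]
    (v : AddValuation F (WithTop Γ)) (z : ι → F) : Prop :=
  ∀ ⦃μ₁ μ₂ μ₃ : ι⦄, μ₁ < μ₂ → μ₂ < μ₃ → v (z μ₁ - z μ₂) < v (z μ₂ - z μ₃)

/-- `y` (in the valued extension `(F,w)` of `(B,v)` along `φ`) is a limit of the
pseudo-Cauchy sequence `z` in `(B,v)`:  `w(y - z_μ) = v(z_μ - z_{μ+1})` for all `μ`. -/
def IsPCLimit {B F ι : Type} [Field B] [Field F] [LinearOrder ι]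
    (succ : ι → ι) (φ : B →+* F)
    (v : AddValuation B (WithTop Γ)) (w : AddValuation F (WithTop Γ))
    (z : ι → B) (y : F) : Prop :=
  ∀ μ : ι, w (y - φ (z μ)) = v (z μ - z (succ μ))

/-- The sequence `s` is ultimately constant. -/
def UltimatelyConstant {ι α : Type} [LinearOrder ι] (s : ι → α) : Prop :=
  ∃ μ₀, ∀ μ, μ₀ ≤ μ → s μ = s μ₀

/-- The sequence `s` is ultimately (strictly) monotonically increasing. -/
def UltimatelyStrictMono {ι α : Type} [LinearOrder ι] [Preorder α] (s : ι → α) : Prop :=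
  ∃ μ₀, ∀ μ₁ μ₂, μ₀ ≤ μ₁ → μ₁ < μ₂ → s μ₁ < s μ₂

/-- The pseudo-Cauchy sequence `z` in `(B,v)` is of transcendental type. -/
def IsTranscendentalType {B ι : Type} [Field B] [LinearOrder ι]
    (v : AddValuation B (WithTop Γ)) (z : ι → B) : Prop :=
  ∀ f : Polynomial B, UltimatelyConstant (fun μ => v (f.eval (z μ)))

/-- `m` is an associated minimal polynomial of the pseudo-Cauchy sequence `z` of
algebraic type: a monic polynomial of minimal degree such that `(v m(z_μ))_μ` is
ultimately monotonically increasing. -/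
def IsAssocMinPoly {B ι : Type} [Field B] [LinearOrder ι]
    (v : AddValuation B (WithTop Γ)) (z : ι → B) (m : Polynomial B) : Prop :=
  m.Monic ∧ UltimatelyStrictMono (fun μ => v (m.eval (z μ))) ∧
    ∀ g : Polynomial B, g.Monic → UltimatelyStrictMono (fun μ => v (g.eval (z μ))) →
      m.natDegree ≤ g.natDegree

/-- `d = δ(f) = max { ω̄(x - c) : c ∈ K̄, f(c) = 0 }`, computed with respect to the
extension `W = ω̄` of `ω` to `K̄(x)`. -/
def IsDeltaOf (W : AddValuation (RatFunc (AlgebraicClosure K)) (WithTop Γ))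
    (f : Polynomial K) (d : WithTop Γ) : Prop :=
  (∃ c : AlgebraicClosure K, Polynomial.aeval c f = 0 ∧
      W (RatFunc.X - algebraMap (AlgebraicClosure K) (RatFunc (AlgebraicClosure K)) c) = d) ∧
  ∀ c : AlgebraicClosure K, Polynomial.aeval c f = 0 →
      W (RatFunc.X - algebraMap (AlgebraicClosure K) (RatFunc (AlgebraicClosure K)) c) ≤ d

/-- `Q` is a key polynomial for `ω` over `K` (with respect to the extension `W = ω̄`,
on which `δ` does not depend): `Q` is monic and `deg f < deg Q → δ(f) < δ(Q)`. -/
def IsKeyPolynomial (W : AddValuation (RatFunc (AlgebraicClosure K)) (WithTop Γ))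
    (Q : Polynomial K) : Prop :=
  Q.Monic ∧ ∀ f : Polynomial K, f.natDegree < Q.natDegree →
    ∀ df dQ : WithTop Γ, IsDeltaOf W f df → IsDeltaOf W Q dQ → df < dQ

/-- `(a,z)` is a distinguished pair over the henselian field `(K,ν̄)`:
`[K(z):K] < [K(a):K]`, `ν̄(a-z) = δ(a,K) = max M(a)`, and `[K(z):K]` is minimal
with these properties. -/
def IsDistinguishedPair (vbar : AddValuation (AlgebraicClosure K) (WithTop Γ))
    (a z : AlgebraicClosure K) : Prop :=
  degOver K z < degOver K a ∧
  (∀ z' : AlgebraicClosure K, degOver K z' < degOver K a → vbar (a - z') ≤ vbar (a - z)) ∧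
  (∀ z' : AlgebraicClosure K, degOver K z' < degOver K a → vbar (a - z') = vbar (a - z) →
      degOver K z ≤ degOver K z')

/-- The extension `(E(x)|E, W)` inside the valued field `(F,W)` is pure, where `x ∈ F`:
(PE1) some `W(x-c)`, `c ∈ E`, is non-torsion modulo the value group of `E`, or
(PE2) some `b(x-c)`, `b,c ∈ E`, has value `0` and residue transcendental over the
residue field of `E`, or (PE3) `x` is the limit of a pseudo-Cauchy sequence of
transcendental type in `(E,W)`. -/
def IsPureExt {F : Type} [Field F] (W : AddValuation F (WithTop Γ))
    (E : Subfield F) (x : F) : Prop :=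
  (∃ c ∈ E, ∃ γ : Γ, W (x - c) = (γ : WithTop Γ) ∧
      ∀ n : ℤ, n ≠ 0 → ∀ b ∈ E, b ≠ 0 → ((n • γ : Γ) : WithTop Γ) ≠ W b) ∨
  (∃ b ∈ E, ∃ c ∈ E, W (b * (x - c)) = 0 ∧ ResidueTransOver W (E : Set F) (b * (x - c))) ∨
  (∃ (ι : Type) (_ : LinearOrder ι) (succ : ι → ι), Nonempty ι ∧ IsSuccFn succ ∧
      ∃ z : ι → F, (∀ μ, z μ ∈ E) ∧ IsPseudoCauchy W z ∧
        (∀ p : Polynomial F, (∀ i, p.coeff i ∈ E) →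
          UltimatelyConstant fun μ => W (p.eval (z μ))) ∧
        IsPCLimit succ (RingHom.id F) W W z x)

/-- The extension `(E(x)|E, W)` is weakly pure: it is pure, or some `b(x-c)^e` with
`b,c ∈ E`, `e ∈ ℕ`, has value `0` and residue transcendental over the residue field
of `E`. -/
def IsWeaklyPureExt {F : Type} [Field F] (W : AddValuation F (WithTop Γ))
    (E : Subfield F) (x : F) : Prop :=
  IsPureExt W E x ∨
    ∃ b ∈ E, ∃ c ∈ E, ∃ e : ℕ, W (b * (x - c) ^ e) = 0 ∧
      ResidueTransOver W (E : Set F) (b * (x - c) ^ e)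


/-! ## Auxiliary development -/

section Aux

variable {K : Type} [Field K] {Γ : Type} [AddCommGroup Γ] [LinearOrder Γ] [IsOrderedAddMonoid Γ]

/-! ### WithTop utilities -/

theorem wsmul_coe (n : ℕ) (γ : Γ) : n • (γ : WithTop Γ) = ((n • γ : Γ) : WithTop Γ) := by
  exact (WithTop.coe_nsmul γ n).symm

theorem wadd_lt_wadd {x y : WithTop Γ} {g h : Γ}
    (hx : (g : WithTop Γ) ≤ x) (hy : (h : WithTop Γ) < y) :
    ((g + h : Γ) : WithTop Γ) < x + y := by
  rcases eq_or_ne x ⊤ with rfl | hxt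
  · rcases eq_or_ne y ⊤ with rfl | hyt
    · simp only [WithTop.add_top]; exact_mod_cast WithTop.coe_lt_top (g+h)
    · simp only [WithTop.top_add]; exact_mod_cast WithTop.coe_lt_top (g+h)
  · rcases eq_or_ne y ⊤ with rfl | hyt
    · simp only [WithTop.add_top]; exact_mod_cast WithTop.coe_lt_top (g+h)
    · lift x to Γ using hxt
      lift y to Γ using hyt
      rw [← WithTop.coe_add, WithTop.coe_lt_coe]
      rw [WithTop.coe_le_coe] at hx
      rw [WithTop.coe_lt_coe] at hy
      exact add_lt_add_of_le_of_lt hx hy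

theorem wadd_le_wadd {x y : WithTop Γ} {g h : Γ}
    (hx : (g : WithTop Γ) ≤ x) (hy : (h : WithTop Γ) ≤ y) :
    ((g + h : Γ) : WithTop Γ) ≤ x + y := by
  rw [WithTop.coe_add]; exact add_le_add hx hy

theorem wcancel_le {x y : WithTop Γ} {c : WithTop Γ} (hc : c ≠ ⊤)
    (h : x + c ≤ y + c) : x ≤ y := by
  rw [add_comm x c, add_comm y c] at h
  exact (WithTop.add_le_add_iff_left hc).1 h

theorem wcancel_lt {x y : WithTop Γ} {c : WithTop Γ} (hc : c ≠ ⊤)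
    (h : x + c < y + c) : x < y := by
  rw [add_comm x c, add_comm y c] at h
  exact (WithTop.add_lt_add_iff_left hc).1 h

/-! ### AddValuation utilities -/

variable {F : Type} [Field F]

/-- If one term of a finite sum has valuation strictly smaller than all others, the sum
has that valuation. -/
theorem val_sum_eq (v : AddValuation F (WithTop Γ)) {ι : Type*} {s : Finset ι} {f : ι → F} {j : ι}
    (hj : j ∈ s) (h : ∀ i ∈ s, i ≠ j → v (f j) < v (f i)) :
    v (∑ i ∈ s, f i) = v (f j) := by
  classical
  rw [← Finset.add_sum_erase _ _ hj]
  rcases Finset.eq_empty_or_nonempty (s.erase j) with he | ⟨i₀, hi₀⟩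
  · rw [he]; simp
  · have hfj : v (f j) ≠ ⊤ := by
      have := h i₀ (Finset.mem_of_mem_erase hi₀) (Finset.ne_of_mem_erase hi₀)
      exact this.ne_top
    refine AddValuation.map_add_eq_of_lt_left v ?_
    refine AddValuation.map_lt_sum v hfj ?_
    intro i hi
    exact h i (Finset.mem_of_mem_erase hi) (Finset.ne_of_mem_erase hi)

theorem val_multiset_prod (v : AddValuation F (WithTop Γ)) (S : Multiset F) :
    v S.prod = (S.map (fun x => v x)).sum := by
  induction S using Multiset.induction_on with
  | empty => simp
  | cons d S ih => simp [AddValuation.map_mul, ih]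


/-! ### Monomial valuation utilities -/

section Monomial

variable {K : Type} [Field K] {Γ : Type} [AddCommGroup Γ] [LinearOrder Γ] [IsOrderedAddMonoid Γ]
variable {vbar : AddValuation (AlgebraicClosure K) (WithTop Γ)}
variable {V : AddValuation (RatFunc (AlgebraicClosure K)) (WithTop Γ)}
variable {b : AlgebraicClosure K} {δ : Γ}

local notation "K̄" => AlgebraicClosure K
local notation "ιp" => algebraMap (Polynomial (AlgebraicClosure K)) (RatFunc (AlgebraicClosure K))

theorem mv_le (hV : IsMonomialVal vbar V b δ) (p : Polynomial K̄) (i : ℕ) :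
    V (ιp p) ≤ vbar ((taylor b p).coeff i) + i • (δ : WithTop Γ) := by
  rw [hV p]
  rcases le_or_gt i p.natDegree with hi | hi
  · exact Finset.inf_le (Finset.mem_range.2 (Nat.lt_succ_of_le hi))
  · have h0 : (taylor b p).coeff i = 0 :=
      coeff_eq_zero_of_natDegree_lt (by rwa [natDegree_taylor])
    rw [h0]
    simp

theorem mv_exists (hV : IsMonomialVal vbar V b δ) (p : Polynomial K̄) :
    ∃ i ≤ p.natDegree, V (ιp p) = vbar ((taylor b p).coeff i) + i • (δ : WithTop Γ) := by
  obtain ⟨i, hi, h⟩ := Finset.exists_mem_eq_inf (Finset.range (p.natDegree + 1))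
    (by simp) (fun i => vbar ((taylor b p).coeff i) + i • (δ : WithTop Γ))
  exact ⟨i, Nat.lt_succ_iff.1 (Finset.mem_range.1 hi), by rw [hV p, h]⟩

theorem mv_ge (hV : IsMonomialVal vbar V b δ) (p : Polynomial K̄) {x : WithTop Γ}
    (h : ∀ i, x ≤ vbar ((taylor b p).coeff i) + i • (δ : WithTop Γ)) : x ≤ V (ιp p) := by
  rw [hV p]
  exact Finset.le_inf fun i _ => h i

theorem mv_C (hV : IsMonomialVal vbar V b δ) (x : K̄) : V (ιp (C x)) = vbar x := by
  rw [hV (C x)]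
  rw [show (C x).natDegree = 0 from natDegree_C x]
  rw [Finset.range_one, Finset.inf_singleton]
  simp [taylor_C]

theorem mv_eval_le (hV : IsMonomialVal vbar V b δ) (p : Polynomial K̄) :
    V (ιp p) ≤ vbar (p.eval b) := by
  have := mv_le hV p 0
  simpa [taylor_coeff_zero] using this

end Monomial


/-! ### Polynomials with roots far from the center -/

section Far

variable {K : Type} [Field K] {Γ : Type} [AddCommGroup Γ] [LinearOrder Γ] [IsOrderedAddMonoid Γ]

local notation "K̄" => AlgebraicClosure K
local notation "ιp" => algebraMap (Polynomial (AlgebraicClosure K)) (RatFunc (AlgebraicClosure K))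

/-- Coefficient bounds for a product of linear factors `X + d` with `vbar d < δ`. -/
theorem far_coeff_bound (vbar : AddValuation (AlgebraicClosure K) (WithTop Γ)) (δ : Γ)
    (S : Multiset K̄) (hS : ∀ d ∈ S, vbar d < (δ : WithTop Γ)) :
    ((S.map (fun d => X + C d)).prod.coeff 0 = S.prod) ∧
      (∀ i : ℕ, 1 ≤ i →
        vbar S.prod < vbar ((S.map (fun d => X + C d)).prod.coeff i) + i • (δ : WithTop Γ)) := by
  induction S using Multiset.induction_on with
  | empty =>
    refine ⟨by simp, fun i hi => ?_⟩
    have h0 : ((Multiset.map (fun d => X + C d) 0).prod : Polynomial K̄).coeff i = 0 := by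
      rw [Multiset.map_zero, Multiset.prod_zero, coeff_one]
      simp only [ite_eq_right_iff]
      omega
    rw [h0, Multiset.prod_zero, AddValuation.map_zero, AddValuation.map_one, top_add]
    exact lt_top_iff_ne_top.2 WithTop.coe_ne_top |>.trans_le le_rfl
  | cons d S ih =>
    have hd : vbar d < (δ : WithTop Γ) := hS d (Multiset.mem_cons_self d S)
    have hdfin : vbar d ≠ ⊤ := hd.ne_top
    have hS' : ∀ d' ∈ S, vbar d' < (δ : WithTop Γ) := fun d' h => hS d' (Multiset.mem_cons_of_mem h)
    obtain ⟨ih0, ihi⟩ := ih hS'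
    have hSfin : vbar S.prod ≠ ⊤ := by
      rw [AddValuation.ne_top_iff]
      refine Multiset.prod_ne_zero ?_
      intro h0
      exact (hS' 0 h0).ne_top (by simp)
    have hprodcons : ((d ::ₘ S).map (fun d => X + C d)).prod =
        X * (S.map (fun d => X + C d)).prod + C d * (S.map (fun d => X + C d)).prod := by
      rw [Multiset.map_cons, Multiset.prod_cons, add_mul]
    set P := (S.map (fun d => X + C d)).prod with hP
    constructor
    · rw [hprodcons, Multiset.prod_cons]
      rw [coeff_add, coeff_C_mul, ih0]
      have h00 : (X * P).coeff 0 = 0 := by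
        rw [mul_coeff_zero, coeff_X_zero, zero_mul]
      rw [h00, zero_add]
    · intro i hi
      rw [hprodcons, Multiset.prod_cons, AddValuation.map_mul]
      obtain ⟨i', rfl⟩ : ∃ i', i = i' + 1 := ⟨i - 1, by omega⟩
      have hcoeff : ((X * P + C d * P).coeff (i' + 1)) = P.coeff i' + d * P.coeff (i' + 1) := by
        rw [coeff_add, coeff_X_mul, coeff_C_mul]
      rw [hcoeff]
      have h1 : vbar d + vbar S.prod < vbar (P.coeff i') + (i' + 1) • (δ : WithTop Γ) := by
        rcases Nat.eq_zero_or_pos i' with rfl | hi'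
        · rw [ih0, zero_add, one_smul, add_comm (vbar S.prod)]
          exact WithTop.add_lt_add_right hSfin hd
        · calc vbar d + vbar S.prod < (δ : WithTop Γ) + vbar S.prod :=
                WithTop.add_lt_add_right hSfin hd
            _ ≤ (δ : WithTop Γ) + (vbar (P.coeff i') + i' • (δ : WithTop Γ)) :=
                add_le_add_right (ihi i' hi').le _
            _ = vbar (P.coeff i') + (i' + 1) • (δ : WithTop Γ) := by
                rw [succ_nsmul]; abel
      have h2 : vbar d + vbar S.prod <
          vbar (d * P.coeff (i' + 1)) + (i' + 1) • (δ : WithTop Γ) := by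
        rw [AddValuation.map_mul, add_assoc]
        exact WithTop.add_lt_add_left hdfin (ihi (i' + 1) (by omega))
      calc vbar d + vbar S.prod
          < min (vbar (P.coeff i') + (i' + 1) • (δ : WithTop Γ))
              (vbar (d * P.coeff (i' + 1)) + (i' + 1) • (δ : WithTop Γ)) := lt_min h1 h2
        _ = min (vbar (P.coeff i')) (vbar (d * P.coeff (i' + 1))) + (i' + 1) • (δ : WithTop Γ) :=
            min_add_add_right _ _ _
        _ ≤ _ := add_le_add_left (AddValuation.map_add vbar _ _) _

end Far


section Far2

variable {K : Type} [Field K] {Γ : Type} [AddCommGroup Γ] [LinearOrder Γ] [IsOrderedAddMonoid Γ]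

local notation "K̄" => AlgebraicClosure K
local notation "ιp" => algebraMap (Polynomial (AlgebraicClosure K)) (RatFunc (AlgebraicClosure K))
local notation "φ" => algebraMap K (AlgebraicClosure K)

theorem taylor_multiset_prod (r : K̄) (S : Multiset (Polynomial K̄)) :
    taylor r S.prod = (S.map (fun p => taylor r p)).prod := by
  induction S using Multiset.induction_on with
  | empty => simp [Polynomial.taylor_one]
  | cons p S ih => rw [Multiset.map_cons, Multiset.prod_cons, Multiset.prod_cons, taylor_mul, ih]

theorem taylor_factor (b : K̄) {p : Polynomial K̄} (hp : p ≠ 0) :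
    taylor b p =
      C p.leadingCoeff * (((p.roots.map (fun ρ => b - ρ)).map (fun d => X + C d)).prod) := by
  conv_lhs => rw [(IsAlgClosed.splits p).eq_prod_roots]
  rw [taylor_mul, taylor_C, taylor_multiset_prod, Multiset.map_map, Multiset.map_map]
  congr 1
  congr 1
  apply Multiset.map_congr rfl
  intro ρ _
  simp only [Function.comp_apply, taylor_apply, sub_comp, X_comp, C_comp]
  rw [C_sub]
  ring

/-- Exact value and strict higher-coefficient bounds for the monomial valuation of a polynomial
all of whose roots are at distance `< δ` from the center `b`. -/
theorem far_exact {vbar : AddValuation K̄ (WithTop Γ)}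
    {V : AddValuation (RatFunc (AlgebraicClosure K)) (WithTop Γ)} {b : K̄} {δ : Γ}
    (hV : IsMonomialVal vbar V b δ) {p : Polynomial K̄} (hp : p ≠ 0)
    (hroots : ∀ ρ ∈ p.roots, vbar (b - ρ) < (δ : WithTop Γ)) :
    V (ιp p) = vbar (p.eval b) ∧
      ∀ i : ℕ, 1 ≤ i →
        vbar (p.eval b) < vbar ((taylor b p).coeff i) + i • (δ : WithTop Γ) := by
  set S : Multiset K̄ := p.roots.map (fun ρ => b - ρ) with hSdef
  have hS : ∀ d ∈ S, vbar d < (δ : WithTop Γ) := by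
    intro d hd
    obtain ⟨ρ, hρ, rfl⟩ := Multiset.mem_map.1 hd
    exact hroots ρ hρ
  obtain ⟨h0, hi⟩ := far_coeff_bound vbar δ S hS
  have hT : taylor b p = C p.leadingCoeff * (S.map (fun d => X + C d)).prod := taylor_factor b hp
  have hlc : vbar p.leadingCoeff ≠ ⊤ := by
    rw [AddValuation.ne_top_iff]
    exact leadingCoeff_ne_zero.2 hp
  have heval : p.eval b = p.leadingCoeff * S.prod := by
    rw [← taylor_coeff_zero b p, hT, coeff_C_mul, h0]
  have hstrict : ∀ i : ℕ, 1 ≤ i →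
      vbar (p.eval b) < vbar ((taylor b p).coeff i) + i • (δ : WithTop Γ) := by
    intro i hi1
    rw [heval, hT, coeff_C_mul, AddValuation.map_mul, AddValuation.map_mul, add_assoc]
    exact WithTop.add_lt_add_left hlc (hi i hi1)
  refine ⟨le_antisymm (mv_eval_le hV p) (mv_ge hV p ?_), hstrict⟩
  intro i
  rcases Nat.eq_zero_or_pos i with rfl | hi1
  · rw [taylor_coeff_zero]
    simp
  · exact (hstrict i hi1).le

/-- T1: for a nonzero `p₀ ∈ K[x]` of degree `< deg a`, the minimality of the pair `(a, γ)`
forces all roots of `p₀` to be far from `a`, whence `W p₀ = vbar (p₀(a))`. -/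
theorem T1 {vbar : AddValuation K̄ (WithTop Γ)}
    {W : AddValuation (RatFunc (AlgebraicClosure K)) (WithTop Γ)} {a : K̄} {γ : Γ}
    (hmv : IsMonomialVal vbar W a γ)
    (hmin : ∀ b : K̄, (γ : WithTop Γ) ≤ vbar (a - b) → degOver K a ≤ degOver K b)
    {p₀ : Polynomial K} (hp : p₀ ≠ 0) (hdeg : p₀.natDegree < degOver K a) :
    W (ιp (p₀.map (algebraMap K (AlgebraicClosure K)))) =
        vbar ((p₀.map (algebraMap K (AlgebraicClosure K))).eval a) ∧
      ∀ i : ℕ, 1 ≤ i →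
        vbar ((p₀.map (algebraMap K (AlgebraicClosure K))).eval a) <
          vbar ((taylor a (p₀.map (algebraMap K (AlgebraicClosure K)))).coeff i) +
            i • (γ : WithTop Γ) := by
  have hmapne : p₀.map (algebraMap K (AlgebraicClosure K)) ≠ 0 :=
    (Polynomial.map_ne_zero_iff (algebraMap K (AlgebraicClosure K)).injective).2 hp
  refine far_exact hmv hmapne ?_
  intro ρ hρ
  have hroot : Polynomial.aeval ρ p₀ = 0 := by
    rw [Polynomial.aeval_def, ← Polynomial.eval_map]
    exact (Polynomial.isRoot_of_mem_roots hρ)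
  have hdegρ : degOver K ρ ≤ p₀.natDegree :=
    Polynomial.natDegree_le_of_dvd (minpoly.dvd K ρ hroot) hp
  by_contra hcon
  push_neg at hcon
  exact absurd (hmin ρ hcon) (by omega)

end Far2


section GaussPower

variable {K : Type} [Field K] {Γ : Type} [AddCommGroup Γ] [LinearOrder Γ] [IsOrderedAddMonoid Γ]
variable {F : Type} [Field F]

theorem coe_le_add_coe_iff {x : WithTop Γ} {g c : Γ} :
    (g : WithTop Γ) ≤ x + (c : WithTop Γ) ↔ ((g - c : Γ) : WithTop Γ) ≤ x := by
  induction x with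
  | top => simp
  | coe x =>
    rw [← WithTop.coe_add, WithTop.coe_le_coe, WithTop.coe_le_coe, sub_le_iff_le_add]

theorem coe_lt_add_coe_iff {x : WithTop Γ} {g c : Γ} :
    (g : WithTop Γ) < x + (c : WithTop Γ) ↔ ((g - c : Γ) : WithTop Γ) < x := by
  induction x with
  | top =>
    rw [WithTop.top_add]
    exact iff_of_true (WithTop.coe_lt_top _) (WithTop.coe_lt_top _)
  | coe x =>
    rw [← WithTop.coe_add, WithTop.coe_lt_coe, WithTop.coe_lt_coe, sub_lt_iff_lt_add]

theorem le_val_sum_add {v : AddValuation F (WithTop Γ)} {ι : Type*} {s : Finset ι} {f : ι → F}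
    {g c : Γ} (h : ∀ i ∈ s, (g : WithTop Γ) ≤ v (f i) + (c : WithTop Γ)) :
    (g : WithTop Γ) ≤ v (∑ i ∈ s, f i) + (c : WithTop Γ) := by
  rw [coe_le_add_coe_iff]
  exact AddValuation.map_le_sum v (fun i hi => coe_le_add_coe_iff.1 (h i hi))

theorem lt_val_sum_add {v : AddValuation F (WithTop Γ)} {ι : Type*} {s : Finset ι} {f : ι → F}
    {g c : Γ} (h : ∀ i ∈ s, (g : WithTop Γ) < v (f i) + (c : WithTop Γ)) :
    (g : WithTop Γ) < v (∑ i ∈ s, f i) + (c : WithTop Γ) := by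
  rw [coe_lt_add_coe_iff]
  exact AddValuation.map_lt_sum' v (WithTop.coe_lt_top _)
    (fun i hi => coe_lt_add_coe_iff.1 (h i hi))

theorem valmul_expand (v : AddValuation F (WithTop Γ)) (c1 c2 : F) (x1 x2 : ℕ) (δ : Γ) :
    v (c1 * c2) + (x1 + x2) • (δ : WithTop Γ) =
      (v c1 + x1 • (δ : WithTop Γ)) + (v c2 + x2 • (δ : WithTop Γ)) := by
  rw [AddValuation.map_mul, add_nsmul, add_add_add_comm]

/-- Powers of a polynomial: the largest coefficient index attaining the monomial-valuation
infimum (with radius `δ`) multiplies, with exact attained value. -/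
theorem gpow (vbar : AddValuation F (WithTop Γ)) {T : Polynomial F} {δ : Γ} {u : Γ} {j : ℕ}
    (hat : vbar (T.coeff j) + j • (δ : WithTop Γ) = (u : WithTop Γ))
    (hmax : ∀ i, j < i → (u : WithTop Γ) < vbar (T.coeff i) + i • (δ : WithTop Γ))
    (hle : ∀ i, (u : WithTop Γ) ≤ vbar (T.coeff i) + i • (δ : WithTop Γ)) :
    ∀ t : ℕ,
      (vbar ((T ^ t).coeff (t * j)) + (t * j) • (δ : WithTop Γ) = ((t • u : Γ) : WithTop Γ)) ∧
      (∀ i, t * j < i →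
        ((t • u : Γ) : WithTop Γ) < vbar ((T ^ t).coeff i) + i • (δ : WithTop Γ)) ∧
      (∀ i, ((t • u : Γ) : WithTop Γ) ≤ vbar ((T ^ t).coeff i) + i • (δ : WithTop Γ)) := by
  intro t
  induction t with
  | zero =>
    refine ⟨by simp, fun i hi => ?_, fun i => ?_⟩
    · rw [pow_zero, coeff_one, if_neg (by omega)]
      simp only [AddValuation.map_zero, top_add, zero_smul, WithTop.coe_zero]
      exact WithTop.coe_lt_top 0
    · rcases Nat.eq_zero_or_pos i with rfl | hi
      · simp
      · rw [pow_zero, coeff_one, if_neg (by omega)]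
        simp
  | succ t ih =>
    obtain ⟨ih1, ih2, ih3⟩ := ih
    have hsucc : ((t + 1) • u : Γ) = u + t • u := by rw [succ_nsmul, add_comm]
    have hpair_le : ∀ x : ℕ × ℕ,
        (((t + 1) • u : Γ) : WithTop Γ) ≤
          vbar ((T ^ t).coeff x.1 * T.coeff x.2) + (x.1 + x.2) • (δ : WithTop Γ) := by
      intro x
      rw [valmul_expand, hsucc, add_comm u (t • u)]
      exact wadd_le_wadd (ih3 x.1) (hle x.2)
    have hpair_lt : ∀ x : ℕ × ℕ, (t * j < x.1 ∨ j < x.2) →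
        (((t + 1) • u : Γ) : WithTop Γ) <
          vbar ((T ^ t).coeff x.1 * T.coeff x.2) + (x.1 + x.2) • (δ : WithTop Γ) := by
      intro x hx
      rw [valmul_expand]
      rcases hx with hx | hx
      · rw [hsucc, add_comm (vbar ((T ^ t).coeff x.1) + x.1 • (δ : WithTop Γ))]
        exact wadd_lt_wadd (hle x.2) (ih2 x.1 hx)
      · rw [hsucc, add_comm u (t • u)]
        exact wadd_lt_wadd (ih3 x.1) (hmax x.2 hx)
    have hsmne : ∀ k : ℕ, (k • (δ : WithTop Γ)) ≠ ⊤ := by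
      intro k
      rw [wsmul_coe]
      exact WithTop.coe_ne_top
    refine ⟨?_, ?_, ?_⟩
    · rw [pow_succ, coeff_mul]
      have hmem : ((t * j, j) : ℕ × ℕ) ∈ Finset.HasAntidiagonal.antidiagonal ((t + 1) * j) := by
        rw [Finset.HasAntidiagonal.mem_antidiagonal]; ring
      have hcorner : vbar ((T ^ t).coeff (t * j) * T.coeff j) + ((t + 1) * j) • (δ : WithTop Γ)
          = (((t + 1) • u : Γ) : WithTop Γ) := by
        rw [show (t + 1) * j = t * j + j by ring, valmul_expand, ih1, hat,
          ← WithTop.coe_add, hsucc, add_comm u (t • u)]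
      have huniq : ∀ x ∈ Finset.HasAntidiagonal.antidiagonal ((t + 1) * j), x ≠ (t * j, j) →
          vbar ((T ^ t).coeff (t * j) * T.coeff j) <
            vbar ((T ^ t).coeff x.1 * T.coeff x.2) := by
        intro x hx hne
        rw [Finset.HasAntidiagonal.mem_antidiagonal] at hx
        have hlin : (t + 1) * j = t * j + j := by ring
        have hsplit : t * j < x.1 ∨ j < x.2 := by
          by_contra hcon
          push_neg at hcon
          have hx1 : x.1 = t * j := by omega
          have hx2 : x.2 = j := by omega
          exact hne (Prod.ext hx1 hx2)
        have hlt := hpair_lt x hsplit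
        rw [hx, ← hcorner] at hlt
        exact wcancel_lt (hsmne _) hlt
      rw [val_sum_eq vbar hmem huniq]
      exact hcorner
    · intro i hi
      rw [pow_succ, coeff_mul, wsmul_coe]
      refine lt_val_sum_add ?_
      intro x hx
      rw [Finset.HasAntidiagonal.mem_antidiagonal] at hx
      have hlin : (t + 1) * j = t * j + j := by ring
      have hsplit : t * j < x.1 ∨ j < x.2 := by
        by_contra hcon
        push_neg at hcon
        omega
      have := hpair_lt x hsplit
      rw [hx, wsmul_coe] at this
      exact this
    · intro i
      rw [pow_succ, coeff_mul, wsmul_coe]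
      refine le_val_sum_add ?_
      intro x hx
      rw [Finset.HasAntidiagonal.mem_antidiagonal] at hx
      have := hpair_le x
      rw [hx, wsmul_coe] at this
      exact this

theorem taylor_pow (r : F) (p : Polynomial F) (n : ℕ) :
    taylor r (p ^ n) = (taylor r p) ^ n := by
  induction n with
  | zero => simpa using taylor_one r
  | succ n ih => rw [pow_succ, pow_succ, taylor_mul, ih]

end GaussPower


section Torsion

variable {K : Type} [Field K] {Γ : Type} [AddCommGroup Γ] [LinearOrder Γ] [IsOrderedAddMonoid Γ]

local notation "K̄" => AlgebraicClosure K

/-- The value group of the algebraic closure is torsion modulo that of `K`. -/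
theorem torsion_lemma (vbar : AddValuation K̄ (WithTop Γ)) {b : K̄} (hb : b ≠ 0) :
    ∃ (s : ℕ) (c : K), 1 ≤ s ∧ c ≠ 0 ∧
      vbar (algebraMap K K̄ c) = ((s • vbar b : WithTop Γ)) := by
  classical
  have hint : IsIntegral K b := Algebra.IsIntegral.isIntegral b
  set g : Polynomial K := minpoly K b with hg
  have hgm : g.Monic := minpoly.monic hint
  have hg0 : g.coeff 0 ≠ 0 := minpoly.coeff_zero_ne_zero hint hb
  set m : ℕ := g.natDegree with hm
  have hm1 : 1 ≤ m := minpoly.natDegree_pos hint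
  set f : ℕ → K̄ := fun i => algebraMap K K̄ (g.coeff i) * b ^ i with hf
  have hsum : ∑ i ∈ Finset.range (m + 1), f i = 0 := by
    have := Polynomial.aeval_eq_sum_range (p := g) b
    rw [minpoly.aeval] at this
    simp only [Algebra.smul_def] at this
    exact this.symm
  have hbfin : vbar b ≠ ⊤ := (AddValuation.ne_top_iff vbar).2 hb
  have hffin : ∀ i, g.coeff i ≠ 0 → vbar (f i) ≠ ⊤ := by
    intro i hi
    rw [AddValuation.ne_top_iff]
    exact mul_ne_zero (by
      simp only [ne_eq, _root_.map_eq_zero]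
      exact hi) (pow_ne_zero _ hb)
  -- pick an index of minimal value
  obtain ⟨j, hjmem, hjmin⟩ := Finset.exists_min_image (Finset.range (m + 1)) (fun i => vbar (f i))
    ⟨0, Finset.mem_range.2 (by omega)⟩
  have hjfin : vbar (f j) ≠ ⊤ := by
    intro htop
    have h0 : vbar (f 0) ≠ ⊤ := hffin 0 hg0
    exact h0 (le_antisymm le_top (htop ▸ hjmin 0 (Finset.mem_range.2 (by omega))))
  -- the minimum must be attained twice
  have htwice : ∃ i ∈ Finset.range (m + 1), i ≠ j ∧ vbar (f i) = vbar (f j) := by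
    by_contra hcon
    push_neg at hcon
    have : vbar (∑ i ∈ Finset.range (m + 1), f i) = vbar (f j) := by
      refine val_sum_eq vbar hjmem ?_
      intro i hi hne
      exact lt_of_le_of_ne (hjmin i hi) (fun h => hcon i hi hne h.symm)
    rw [hsum, AddValuation.map_zero] at this
    exact hjfin this.symm
  obtain ⟨i, himem, hine, hival⟩ := htwice
  -- both coefficients are nonzero
  have hgi : g.coeff i ≠ 0 := by
    intro h0
    rw [hival.symm] at hjfin
    exact hjfin (by rw [hf]; simp [h0])
  have hgj : g.coeff j ≠ 0 := by
    intro h0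
    exact hjfin (by rw [hf]; simp [h0])
  -- extract the torsion relation
  have key : ∀ p q : ℕ, q < p → vbar (f p) = vbar (f q) → g.coeff p ≠ 0 → g.coeff q ≠ 0 →
      ∃ (s : ℕ) (c : K), 1 ≤ s ∧ c ≠ 0 ∧
        vbar (algebraMap K K̄ c) = ((s • vbar b : WithTop Γ)) := by
    intro p q hpq hval hgp hgq
    refine ⟨p - q, g.coeff q / g.coeff p, by omega, div_ne_zero hgq hgp, ?_⟩
    have hveq : vbar (algebraMap K K̄ (g.coeff p)) + p • vbar b
        = vbar (algebraMap K K̄ (g.coeff q)) + q • vbar b := by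
      have h1 : vbar (f p) = vbar (algebraMap K K̄ (g.coeff p)) + p • vbar b := by
        rw [hf]
        simp only [AddValuation.map_mul, AddValuation.map_pow]
      have h2 : vbar (f q) = vbar (algebraMap K K̄ (g.coeff q)) + q • vbar b := by
        rw [hf]
        simp only [AddValuation.map_mul, AddValuation.map_pow]
      rw [← h1, ← h2, hval]
    have hq' : vbar (algebraMap K K̄ (g.coeff q))
        = vbar (algebraMap K K̄ (g.coeff q / g.coeff p)) + vbar (algebraMap K K̄ (g.coeff p)) := by
      rw [← AddValuation.map_mul, ← map_mul, div_mul_cancel₀ _ hgp]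
    have hsplit : p • vbar b = (p - q) • vbar b + q • vbar b := by
      rw [← add_nsmul]
      congr 1
      omega
    rw [hq', hsplit] at hveq
    -- cancel q • vbar b then vbar (g.coeff p)
    obtain ⟨β, hβ⟩ := WithTop.ne_top_iff_exists.1 hbfin
    have hqfin : (q • vbar b) ≠ ⊤ := by
      rw [← hβ, wsmul_coe]
      exact WithTop.coe_ne_top
    have hpfin : vbar (algebraMap K K̄ (g.coeff p)) ≠ ⊤ := by
      rw [AddValuation.ne_top_iff]
      simp only [ne_eq, _root_.map_eq_zero]
      exact hgp
    have h3 : vbar (algebraMap K K̄ (g.coeff p)) + (p - q) • vbar b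
        = vbar (algebraMap K K̄ (g.coeff q / g.coeff p)) + vbar (algebraMap K K̄ (g.coeff p)) := by
      have h4 := hveq
      rw [← add_assoc] at h4
      exact (wcancel_le hqfin h4.le).antisymm (wcancel_le hqfin h4.ge)
    rw [add_comm (vbar (algebraMap K K̄ (g.coeff p))) ((p - q) • vbar b)] at h3
    rw [add_comm (vbar (algebraMap K K̄ (g.coeff q / g.coeff p)))
      (vbar (algebraMap K K̄ (g.coeff p)))] at h3
    rw [add_comm (vbar (algebraMap K K̄ (g.coeff p)))
      (vbar (algebraMap K K̄ (g.coeff q / g.coeff p)))] at h3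
    exact ((wcancel_le hpfin h3.le).antisymm (wcancel_le hpfin h3.ge)).symm
  rcases lt_or_gt_of_ne hine with h | h
  · exact key j i h hival.symm hgj hgi
  · exact key i j h hival hgi hgj

end Torsion

section Plumbing

variable {K : Type} [Field K] {Γ : Type} [AddCommGroup Γ] [LinearOrder Γ] [IsOrderedAddMonoid Γ]

local notation "K̄" => AlgebraicClosure K
local notation "ιp" => algebraMap (Polynomial (AlgebraicClosure K)) (RatFunc (AlgebraicClosure K))

theorem liftRF_algebraMap (p : Polynomial K) :
    liftRF K (algebraMap (Polynomial K) (RatFunc K) p) =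
      ιp (p.map (algebraMap K K̄)) := by
  unfold liftRF
  rw [RatFunc.coe_mapRingHom_eq_coe_map]
  have h1 : algebraMap (Polynomial K) (RatFunc K) p
      = algebraMap (Polynomial K) (RatFunc K) p / algebraMap (Polynomial K) (RatFunc K) 1 := by
    rw [map_one, div_one]
  rw [h1, RatFunc.map_apply_div, map_one, map_one, div_one]
  rfl

theorem W_eq_omega {ω : AddValuation (RatFunc K) (WithTop Γ)}
    {W : AddValuation (RatFunc (AlgebraicClosure K)) (WithTop Γ)}
    (hWω : Extends (liftRF K) ω W) (p : Polynomial K) :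
    W (ιp (p.map (algebraMap K K̄))) = ω (algebraMap (Polynomial K) (RatFunc K) p) := by
  rw [← liftRF_algebraMap]
  exact hWω _

theorem map_hasseDeriv (i : ℕ) (p : Polynomial K) :
    (p.hasseDeriv i).map (algebraMap K K̄) = (p.map (algebraMap K K̄)).hasseDeriv i := by
  ext n
  rw [Polynomial.coeff_map, Polynomial.hasseDeriv_coeff, Polynomial.hasseDeriv_coeff,
    Polynomial.coeff_map, map_mul, map_natCast]

theorem taylor_coeff_map (a : K̄) (p : Polynomial K) (i : ℕ) :
    (taylor a (p.map (algebraMap K K̄))).coeff i =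
      ((p.hasseDeriv i).map (algebraMap K K̄)).eval a := by
  rw [taylor_coeff, map_hasseDeriv]

end Plumbing


section Stage1a

variable {K : Type} [Field K] {Γ : Type} [AddCommGroup Γ] [LinearOrder Γ] [IsOrderedAddMonoid Γ]

local notation "K̄" => AlgebraicClosure K
local notation "ιp" => algebraMap (Polynomial (AlgebraicClosure K)) (RatFunc (AlgebraicClosure K))

/-- If all coefficients `i ≥ 1` of the Taylor expansion of `p` at the center `b` lie strictly
above the (finite) value `Λ` of `p`, then `V (p^N - p(b)^N) > N•Λ`. -/
theorem pow_diff_bound {vbar : AddValuation K̄ (WithTop Γ)}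
    {V : AddValuation (RatFunc (AlgebraicClosure K)) (WithTop Γ)} {b : K̄} {δ : Γ}
    (hV : IsMonomialVal vbar V b δ) {p : Polynomial K̄} {Λ : Γ}
    (hval : vbar (p.eval b) = (Λ : WithTop Γ))
    (hstrict : ∀ i : ℕ, 1 ≤ i →
      (Λ : WithTop Γ) < vbar ((taylor b p).coeff i) + i • (δ : WithTop Γ)) :
    ∀ N : ℕ, 1 ≤ N →
      ((N • Λ : Γ) : WithTop Γ) < V (ιp (p ^ N - C (p.eval b) ^ N)) := by
  have hpv : V (ιp p) = (Λ : WithTop Γ) := by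
    refine le_antisymm (hval ▸ mv_eval_le hV p) (mv_ge hV p ?_)
    intro i
    rcases Nat.eq_zero_or_pos i with rfl | hi
    · rw [taylor_coeff_zero, hval]
      simp
    · exact (hstrict i hi).le
  have hdiff1 : (Λ : WithTop Γ) < V (ιp (p - C (p.eval b))) := by
    obtain ⟨i, hile, hi⟩ := mv_exists hV (p - C (p.eval b))
    rw [hi]
    have htaylor : ∀ i : ℕ, (taylor b (p - C (p.eval b))).coeff i
        = (taylor b p).coeff i - (C (p.eval b)).coeff i := by
      intro i
      rw [map_sub, Polynomial.coeff_sub, taylor_C]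
    rcases Nat.eq_zero_or_pos i with rfl | hi1
    · rw [htaylor 0, taylor_coeff_zero, coeff_C_zero, sub_self]
      simp only [AddValuation.map_zero, top_add, zero_smul, add_top]
      exact WithTop.coe_lt_top Λ
    · rw [htaylor i, coeff_C, if_neg (by omega), sub_zero]
      exact hstrict i hi1
  intro N hN
  have hfact : (p ^ N - C (p.eval b) ^ N)
      = (∑ i ∈ Finset.range N, p ^ i * C (p.eval b) ^ (N - 1 - i)) * (p - C (p.eval b)) :=
    (geom_sum₂_mul p (C (p.eval b)) N).symm
  rw [hfact, map_mul, AddValuation.map_mul]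
  have hgeom : (((N - 1) • Λ : Γ) : WithTop Γ)
      ≤ V (ιp (∑ i ∈ Finset.range N, p ^ i * C (p.eval b) ^ (N - 1 - i))) := by
    rw [map_sum]
    refine AddValuation.map_le_sum V ?_
    intro i hi
    rw [Finset.mem_range] at hi
    rw [map_mul, map_pow, map_pow, AddValuation.map_mul, AddValuation.map_pow,
      AddValuation.map_pow, hpv, mv_C hV, hval, wsmul_coe, wsmul_coe, ← WithTop.coe_add,
      WithTop.coe_le_coe, ← add_nsmul]
    have : i + (N - 1 - i) = N - 1 := by omega
    rw [this]
  have hNsplit : (N • Λ : Γ) = (N - 1) • Λ + Λ := by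
    rw [← succ_nsmul]
    congr 1
    omega
  rw [hNsplit]
  exact wadd_lt_wadd hgeom hdiff1

end Stage1a


section Stage1bc

variable {K : Type} [Field K] {Γ : Type} [AddCommGroup Γ] [LinearOrder Γ] [IsOrderedAddMonoid Γ]

local notation "K̄" => AlgebraicClosure K
local notation "ιp" => algebraMap (Polynomial (AlgebraicClosure K)) (RatFunc (AlgebraicClosure K))

/-- W-side upper bound in Stage 1: the value of `∑ u i • Qb^(s i)` is at most `(m s)Λ`. -/
theorem Wside_bound {vbar : AddValuation K̄ (WithTop Γ)}
    {W : AddValuation (RatFunc (AlgebraicClosure K)) (WithTop Γ)} {a : K̄} {γ : Γ}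
    (hmv : IsMonomialVal vbar W a γ) {Qb : Polynomial K̄} {Λ : Γ} {j : ℕ}
    (hjat : vbar ((taylor a Qb).coeff j) + j • (γ : WithTop Γ) = (Λ : WithTop Γ))
    (hjmax : ∀ i, j < i → (Λ : WithTop Γ) < vbar ((taylor a Qb).coeff i) + i • (γ : WithTop Γ))
    (hjle : ∀ i, (Λ : WithTop Γ) ≤ vbar ((taylor a Qb).coeff i) + i • (γ : WithTop Γ))
    (hj1 : 1 ≤ j)
    {s m iw : ℕ} {u : ℕ → K̄}
    (hs : 1 ≤ s) (hiwm : iw ≤ m)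
    (hvals : ∀ i, ((((m - i) * s) • Λ : Γ) : WithTop Γ) ≤ vbar (u i))
    (hviw : vbar (u iw) = ((((m - iw) * s) • Λ : Γ) : WithTop Γ))
    (hstrict : ∀ i, iw < i → ((((m - i) * s) • Λ : Γ) : WithTop Γ) < vbar (u i)) :
    W (ιp (∑ i ∈ Finset.range (m + 1), C (u i) * Qb ^ (s * i))) ≤
      (((m * s) • Λ : Γ) : WithTop Γ) := by
  classical
  set T : Polynomial K̄ := taylor a Qb with hT
  obtain gp := gpow vbar hjat hjmax hjle
  set ℓ : ℕ := s * iw * j with hℓ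
  have harith : ∀ i : ℕ, i ≤ m → (m - i) * s + s * i = m * s := by
    intro i him
    rw [Nat.sub_mul, Nat.mul_comm s i]
    exact Nat.sub_add_cancel (Nat.mul_le_mul_right s him)
  -- taylor expansion of the sum
  have htaylor : taylor a (∑ i ∈ Finset.range (m + 1), C (u i) * Qb ^ (s * i))
      = ∑ i ∈ Finset.range (m + 1), C (u i) * T ^ (s * i) := by
    rw [map_sum]
    refine Finset.sum_congr rfl ?_
    intro i _
    rw [taylor_mul, taylor_C, taylor_pow]
  have hcoeff : (taylor a (∑ i ∈ Finset.range (m + 1), C (u i) * Qb ^ (s * i))).coeff ℓ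
      = ∑ i ∈ Finset.range (m + 1), u i * (T ^ (s * i)).coeff ℓ := by
    rw [htaylor, finset_sum_coeff]
    refine Finset.sum_congr rfl ?_
    intro i _
    rw [coeff_C_mul]
  -- the value of each summand of the coefficient, shifted by ℓ • γ
  have hterm_iw : vbar (u iw * (T ^ (s * iw)).coeff ℓ) + ℓ • (γ : WithTop Γ)
      = (((m * s) • Λ : Γ) : WithTop Γ) := by
    have h1 := (gp (s * iw)).1
    rw [AddValuation.map_mul, add_assoc, hviw]
    rw [show ℓ = (s * iw) * j from rfl, h1, ← WithTop.coe_add, ← add_nsmul,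
      harith iw hiwm]
  have hterm_gt : ∀ i ∈ Finset.range (m + 1), i ≠ iw →
      (((m * s) • Λ : Γ) : WithTop Γ) < vbar (u i * (T ^ (s * i)).coeff ℓ) + ℓ • (γ : WithTop Γ) := by
    intro i hi hne
    rw [Finset.mem_range] at hi
    rw [AddValuation.map_mul, add_assoc]
    have hsplit : ((m * s) • Λ : Γ) = ((m - i) * s) • Λ + (s * i) • Λ := by
      rw [← add_nsmul, harith i (by omega)]
    rw [hsplit]
    rcases lt_or_gt_of_ne hne with hlt | hgt
    · -- i < iw : strict from the gpow side
      have hlg : (s * i) * j < ℓ := by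
        have h1 : s * i < s * iw := by
          exact Nat.mul_lt_mul_of_le_of_lt (le_refl s) hlt (by omega)
        have h2 : s * i * j < s * iw * j := by
          exact Nat.mul_lt_mul_of_lt_of_le h1 (le_refl j) (by omega)
        exact h2
      exact wadd_lt_wadd (hvals i) ((gp (s * i)).2.1 ℓ hlg)
    · -- iw < i : strict from the scalar side
      have hcoefle := (gp (s * i)).2.2 ℓ
      rw [WithTop.coe_add]
      calc ((((m - i) * s) • Λ : Γ) : WithTop Γ) + (((s * i) • Λ : Γ) : WithTop Γ)
          < vbar (u i) + (((s * i) • Λ : Γ) : WithTop Γ) := by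
            refine WithTop.add_lt_add_right WithTop.coe_ne_top (hstrict i hgt)
        _ ≤ vbar (u i) + (vbar ((T ^ (s * i)).coeff ℓ) + ℓ • (γ : WithTop Γ)) := by
            exact add_le_add_right hcoefle _
  -- conclude via the coefficient at ℓ
  refine le_trans (mv_le hmv _ ℓ) ?_
  rw [hcoeff]
  have hiwmem : iw ∈ Finset.range (m + 1) := Finset.mem_range.2 (by omega)
  have huniq : ∀ i ∈ Finset.range (m + 1), i ≠ iw →
      vbar (u iw * (T ^ (s * iw)).coeff ℓ) < vbar (u i * (T ^ (s * i)).coeff ℓ) := by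
    intro i hi hne
    have h1 := hterm_gt i hi hne
    rw [← hterm_iw] at h1
    refine wcancel_lt ?_ h1
    rw [wsmul_coe]
    exact WithTop.coe_ne_top
  rw [val_sum_eq vbar hiwmem huniq]
  exact hterm_iw.le

end Stage1bc


section Stage1d

variable {K : Type} [Field K] {Γ : Type} [AddCommGroup Γ] [LinearOrder Γ] [IsOrderedAddMonoid Γ]

local notation "K̄" => AlgebraicClosure K
local notation "ιp" => algebraMap (Polynomial (AlgebraicClosure K)) (RatFunc (AlgebraicClosure K))

/-- W'-side strict lower bound in Stage 1. -/
theorem W'side_bound {vbar : AddValuation K̄ (WithTop Γ)}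
    {W' : AddValuation (RatFunc (AlgebraicClosure K)) (WithTop Γ)} {a' : K̄} {γ' : Γ}
    (hmv' : IsMonomialVal vbar W' a' γ') {Qb : Polynomial K̄} {Λ : Γ}
    (hval : vbar (Qb.eval a') = (Λ : WithTop Γ))
    (hstrict : ∀ i : ℕ, 1 ≤ i →
      (Λ : WithTop Γ) < vbar ((taylor a' Qb).coeff i) + i • (γ' : WithTop Γ))
    {s m : ℕ} {u : ℕ → K̄} (hs : 1 ≤ s)
    (hvals : ∀ i, ((((m - i) * s) • Λ : Γ) : WithTop Γ) ≤ vbar (u i))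
    (hzero : ∑ i ∈ Finset.range (m + 1), u i * (Qb.eval a') ^ (s * i) = 0) :
    (((m * s) • Λ : Γ) : WithTop Γ) <
      W' (ιp (∑ i ∈ Finset.range (m + 1), C (u i) * Qb ^ (s * i))) := by
  classical
  have harith : ∀ i : ℕ, i ≤ m → (m - i) * s + s * i = m * s := by
    intro i him
    rw [Nat.sub_mul, Nat.mul_comm s i]
    exact Nat.sub_add_cancel (Nat.mul_le_mul_right s him)
  have hsplit : ∑ i ∈ Finset.range (m + 1), C (u i) * Qb ^ (s * i)
      = ∑ i ∈ Finset.range (m + 1), C (u i) * (Qb ^ (s * i) - C (Qb.eval a') ^ (s * i)) := by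
    rw [Finset.sum_congr rfl (fun i _ => (mul_sub (C (u i)) _ _ : _))]
    rw [Finset.sum_sub_distrib]
    have hC : ∑ i ∈ Finset.range (m + 1), C (u i) * C (Qb.eval a') ^ (s * i)
        = C (∑ i ∈ Finset.range (m + 1), u i * (Qb.eval a') ^ (s * i)) := by
      rw [map_sum]
      refine Finset.sum_congr rfl ?_
      intro i _
      rw [map_mul, map_pow]
    rw [hC, hzero, map_zero, sub_zero]
  rw [hsplit, map_sum]
  refine AddValuation.map_lt_sum' W' (WithTop.coe_lt_top _) ?_
  intro i hi
  rw [Finset.mem_range] at hi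
  rcases eq_or_ne (u i) 0 with hu | hu
  · rw [hu, map_zero, zero_mul, map_zero, AddValuation.map_zero]
    exact WithTop.coe_lt_top _
  rcases Nat.eq_zero_or_pos i with rfl | hi1
  · rw [Nat.mul_zero, pow_zero, pow_zero, sub_self, mul_zero, map_zero, AddValuation.map_zero]
    exact WithTop.coe_lt_top _
  · rw [map_mul, AddValuation.map_mul, mv_C hmv']
    have hdiff := pow_diff_bound hmv' hval hstrict (s * i) (by exact Nat.one_le_iff_ne_zero.2 (by positivity))
    have hms : (m * s) • Λ = ((m - i) * s) • Λ + (s * i) • Λ := by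
      rw [← add_nsmul, harith i (by omega)]
    rw [hms]
    exact wadd_lt_wadd (hvals i) hdiff

end Stage1d


section Stage1

variable {K : Type} [Field K] {Γ : Type} [AddCommGroup Γ] [LinearOrder Γ] [IsOrderedAddMonoid Γ]

local notation "K̄" => AlgebraicClosure K
local notation "ιp" => algebraMap (Polynomial (AlgebraicClosure K)) (RatFunc (AlgebraicClosure K))
local notation "φ" => algebraMap K (AlgebraicClosure K)

/-- Stage 1: the degrees of the two minimal pairs agree. -/
theorem stage1 {vbar : AddValuation K̄ (WithTop Γ)} {ω : AddValuation (RatFunc K) (WithTop Γ)}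
    {W W' : AddValuation (RatFunc (AlgebraicClosure K)) (WithTop Γ)}
    (hWω : Extends (liftRF K) ω W) (hW'ω : Extends (liftRF K) ω W')
    {a a' : K̄} {γ γ' : Γ}
    (hW : IsMinimalPairFor vbar W a γ) (hW' : IsMinimalPairFor vbar W' a' γ')
    (hlt : degOver K a < degOver K a') : False := by
  classical
  have hintA : IsIntegral K a := Algebra.IsIntegral.isIntegral a
  set Q : Polynomial K := minpoly K a with hQdef
  have hQne : Q ≠ 0 := minpoly.ne_zero hintA
  set Qb : Polynomial K̄ := Q.map φ with hQb
  have hQbne : Qb ≠ 0 := (Polynomial.map_ne_zero_iff (algebraMap K K̄).injective).2 hQne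
  -- all roots of `Q` are far from `a'`
  have hfar : ∀ ρ ∈ Qb.roots, vbar (a' - ρ) < (γ' : WithTop Γ) := by
    intro ρ hρ
    have hroot : Polynomial.aeval ρ Q = 0 := by
      rw [Polynomial.aeval_def, ← Polynomial.eval_map]
      exact Polynomial.isRoot_of_mem_roots hρ
    have hρdeg : degOver K ρ ≤ Q.natDegree :=
      Polynomial.natDegree_le_of_dvd (minpoly.dvd K ρ hroot) hQne
    by_contra hcon
    push_neg at hcon
    have h1 := hW'.2 ρ hcon
    have h2 : degOver K ρ ≤ degOver K a := hρdeg
    omega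
  -- `a'` is not a root of `Q`
  have hb₀ne : Qb.eval a' ≠ 0 := by
    intro h0
    have hroot : Polynomial.aeval a' Q = 0 := by
      rw [Polynomial.aeval_def, ← Polynomial.eval_map]
      exact h0
    have h1 : degOver K a' ≤ degOver K a :=
      Polynomial.natDegree_le_of_dvd (minpoly.dvd K a' hroot) hQne
    omega
  obtain ⟨e1, e1s⟩ := far_exact hW'.1 hQbne hfar
  have hΛfin : vbar (Qb.eval a') ≠ ⊤ := (AddValuation.ne_top_iff vbar).2 hb₀ne
  obtain ⟨Λ, hΛ⟩ := WithTop.ne_top_iff_exists.1 hΛfin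
  set b₀ : K̄ := Qb.eval a' with hb₀def
  -- `Q` has the same value under both extensions
  have hWQ : W (ιp Qb) = (Λ : WithTop Γ) := by
    rw [hQb, W_eq_omega hWω, ← W_eq_omega hW'ω, ← hQb, e1, hΛ]
  -- largest attaining index on the W-side
  set T : Polynomial K̄ := taylor a Qb with hT
  set A : Finset ℕ := (Finset.range (Qb.natDegree + 1)).filter
      (fun i => vbar (T.coeff i) + i • (γ : WithTop Γ) = (Λ : WithTop Γ)) with hA
  have hAne : A.Nonempty := by
    obtain ⟨i, hile, hi⟩ := mv_exists hW.1 Qb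
    rw [hWQ] at hi
    exact ⟨i, Finset.mem_filter.2 ⟨Finset.mem_range.2 (by omega), hi.symm⟩⟩
  set j : ℕ := A.max' hAne with hj
  have hjA : j ∈ A := A.max'_mem hAne
  have hjat : vbar (T.coeff j) + j • (γ : WithTop Γ) = (Λ : WithTop Γ) :=
    (Finset.mem_filter.1 hjA).2
  have hjle : ∀ i, (Λ : WithTop Γ) ≤ vbar (T.coeff i) + i • (γ : WithTop Γ) := by
    intro i
    rw [← hWQ]
    exact mv_le hW.1 Qb i
  have hjmax : ∀ i, j < i → (Λ : WithTop Γ) < vbar (T.coeff i) + i • (γ : WithTop Γ) := by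
    intro i hgt
    rcases lt_or_ge Qb.natDegree i with hbig | hle2
    · have h0 : T.coeff i = 0 := coeff_eq_zero_of_natDegree_lt (by
        rw [hT, natDegree_taylor]; exact hbig)
      rw [h0, AddValuation.map_zero, top_add]
      exact WithTop.coe_lt_top Λ
    · refine lt_of_le_of_ne (hjle i) (fun heq => ?_)
      have hiA : i ∈ A := Finset.mem_filter.2 ⟨Finset.mem_range.2 (by omega), heq.symm⟩
      have := A.le_max' i hiA
      omega
  have hj1 : 1 ≤ j := by
    by_contra hcon
    push_neg at hcon
    interval_cases j
    · have hc0 : T.coeff 0 = 0 := by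
        rw [hT, taylor_coeff_zero, hQb, Polynomial.eval_map, ← Polynomial.aeval_def,
          minpoly.aeval]
      rw [hc0, AddValuation.map_zero, top_add] at hjat
      exact (WithTop.coe_ne_top (a := Λ)) hjat.symm
  -- torsion relation
  obtain ⟨s, c, hs1, hc0, hsc⟩ := torsion_lemma vbar hb₀ne
  have hφc : (φ c) ≠ 0 := fun h => hc0 ((algebraMap K K̄).injective (by rw [h, map_zero]))
  have hsc' : vbar (φ c) = (((s • Λ : Γ)) : WithTop Γ) := by
    rw [hsc, ← hΛ, wsmul_coe]
  -- the auxiliary algebraic element and its minimal polynomial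
  set e'' : K̄ := b₀ ^ s / (φ c) with he''
  have he''ne : e'' ≠ 0 := div_ne_zero (pow_ne_zero _ hb₀ne) hφc
  have hint'' : IsIntegral K e'' := Algebra.IsIntegral.isIntegral e''
  set g : Polynomial K := minpoly K e'' with hgdef
  have hgne : g ≠ 0 := minpoly.ne_zero hint''
  set m : ℕ := g.natDegree with hm
  obtain ⟨j₀, hj₀mem, hj₀min⟩ := Finset.exists_min_image g.support
    (fun i => vbar (φ (g.coeff i))) (Polynomial.support_nonempty.2 hgne)
  have hgj₀ : g.coeff j₀ ≠ 0 := Polynomial.mem_support_iff.1 hj₀mem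
  have hφgj₀ : (φ (g.coeff j₀)) ≠ 0 :=
    fun h => hgj₀ ((algebraMap K K̄).injective (by rw [h, map_zero]))
  have hφgj₀fin : vbar (φ (g.coeff j₀)) ≠ ⊤ := (AddValuation.ne_top_iff vbar).2 hφgj₀
  set k : ℕ → K := fun i => g.coeff i / g.coeff j₀ with hk
  have hkj₀ : k j₀ = 1 := div_self hgj₀
  have hknonneg : ∀ i, (0 : WithTop Γ) ≤ vbar (φ (k i)) := by
    intro i
    rcases eq_or_ne (g.coeff i) 0 with h0 | h0
    · rw [hk]
      simp only [h0, zero_div, map_zero, AddValuation.map_zero]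
      exact le_top
    · by_contra hneg
      push_neg at hneg
      have hmem : i ∈ g.support := Polynomial.mem_support_iff.2 h0
      have heq : φ (g.coeff i) = φ (k i) * φ (g.coeff j₀) := by
        rw [hk, ← map_mul, div_mul_cancel₀ _ hgj₀]
      have : vbar (φ (g.coeff i)) < vbar (φ (g.coeff j₀)) := by
        rw [heq, AddValuation.map_mul]
        calc vbar (φ (k i)) + vbar (φ (g.coeff j₀))
            < 0 + vbar (φ (g.coeff j₀)) := WithTop.add_lt_add_right hφgj₀fin hneg
          _ = vbar (φ (g.coeff j₀)) := zero_add _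
      exact absurd (hj₀min i hmem) (not_le.2 this)
  -- the set of indices with unit coefficient, and its maximum
  set B : Finset ℕ := (Finset.range (m + 1)).filter (fun i => vbar (φ (k i)) = 0) with hB
  have hBne : B.Nonempty := by
    refine ⟨j₀, Finset.mem_filter.2 ⟨Finset.mem_range.2 ?_, ?_⟩⟩
    · have := Polynomial.le_natDegree_of_ne_zero hgj₀
      omega
    · rw [hkj₀, map_one, AddValuation.map_one]
  set iw : ℕ := B.max' hBne with hiw
  have hiwB : iw ∈ B := B.max'_mem hBne
  have hiwm : iw ≤ m := by
    have := (Finset.mem_filter.1 hiwB).1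
    rw [Finset.mem_range] at this
    omega
  have hiw0 : vbar (φ (k iw)) = 0 := (Finset.mem_filter.1 hiwB).2
  have hiwgt : ∀ i, iw < i → (0 : WithTop Γ) < vbar (φ (k i)) := by
    intro i hgt
    rcases lt_or_ge m i with hbig | hle2
    · -- beyond the degree the coefficients vanish
      have h0 : g.coeff i = 0 := coeff_eq_zero_of_natDegree_lt hbig
      rw [hk]
      simp only [h0, zero_div, map_zero, AddValuation.map_zero]
      exact WithTop.coe_lt_top 0 |>.trans_le le_top |>.trans_le le_rfl |>.le.lt_of_ne (by simp)
    · refine lt_of_le_of_ne (hknonneg i) (fun heq => ?_)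
      have hiB : i ∈ B := Finset.mem_filter.2 ⟨Finset.mem_range.2 (by omega), heq.symm⟩
      have := B.le_max' i hiB
      omega
  -- the coefficient family
  set u : ℕ → K̄ := fun i => φ (k i) * (φ c) ^ (m - i) with hu
  have huval : ∀ i, vbar (u i) = vbar (φ (k i)) + ((((m - i) * s) • Λ : Γ) : WithTop Γ) := by
    intro i
    rw [hu]
    simp only
    rw [AddValuation.map_mul, AddValuation.map_pow, hsc', wsmul_coe, ← wsmul_coe, wsmul_coe,
      mul_nsmul, smul_comm (m - i) s Λ]
  have hvals : ∀ i, ((((m - i) * s) • Λ : Γ) : WithTop Γ) ≤ vbar (u i) := by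
    intro i
    rw [huval i]
    exact le_add_of_nonneg_left (hknonneg i)
  have hviw : vbar (u iw) = ((((m - iw) * s) • Λ : Γ) : WithTop Γ) := by
    rw [huval iw, hiw0, zero_add]
  have hstrict : ∀ i, iw < i → ((((m - i) * s) • Λ : Γ) : WithTop Γ) < vbar (u i) := by
    intro i hgt
    rw [huval i]
    calc ((((m - i) * s) • Λ : Γ) : WithTop Γ)
        = 0 + ((((m - i) * s) • Λ : Γ) : WithTop Γ) := (zero_add _).symm
      _ < vbar (φ (k i)) + ((((m - i) * s) • Λ : Γ) : WithTop Γ) :=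
          WithTop.add_lt_add_right WithTop.coe_ne_top (hiwgt i hgt)
  -- the vanishing scalar relation
  have hrel : ∑ i ∈ Finset.range (m + 1), φ (k i) * e'' ^ i = 0 := by
    have haev : ∑ i ∈ Finset.range (m + 1), φ (g.coeff i) * e'' ^ i = 0 := by
      have h1 := Polynomial.aeval_eq_sum_range (p := g) e''
      rw [minpoly.aeval] at h1
      simp only [Algebra.smul_def] at h1
      exact h1.symm
    have : ∑ i ∈ Finset.range (m + 1), φ (k i) * e'' ^ i
        = (∑ i ∈ Finset.range (m + 1), φ (g.coeff i) * e'' ^ i) / φ (g.coeff j₀) := by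
      rw [Finset.sum_div]
      refine Finset.sum_congr rfl ?_
      intro i _
      rw [hk]
      simp only
      rw [map_div₀, div_mul_eq_mul_div]
    rw [this, haev, zero_div]
  have hzero : ∑ i ∈ Finset.range (m + 1), u i * (Qb.eval a') ^ (s * i) = 0 := by
    have hterm : ∀ i ∈ Finset.range (m + 1),
        u i * (Qb.eval a') ^ (s * i) = (φ c) ^ m * (φ (k i) * e'' ^ i) := by
      intro i hi
      rw [Finset.mem_range] at hi
      rw [hu]
      simp only
      rw [← hb₀def, he'', div_pow, ← pow_mul, Nat.mul_comm s i,
        pow_sub₀ _ hφc (by omega : i ≤ m)]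
      field_simp
    rw [Finset.sum_congr rfl hterm, ← Finset.mul_sum, hrel, mul_zero]
  -- assemble the contradiction
  have hAbound := Wside_bound hW.1 hjat hjmax hjle hj1 hs1 hiwm hvals hviw hstrict
  have he1s' : ∀ i : ℕ, 1 ≤ i →
      (Λ : WithTop Γ) < vbar ((taylor a' Qb).coeff i) + i • (γ' : WithTop Γ) := by
    intro i hi
    rw [hΛ]
    exact e1s i hi
  have hBbound := W'side_bound hW'.1 hΛ.symm he1s' hs1 hvals hzero
  -- the polynomial is defined over K
  set P₀ : Polynomial K := ∑ i ∈ Finset.range (m + 1), C (k i * c ^ (m - i)) * Q ^ (s * i)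
    with hP₀
  have hmap : P₀.map φ = ∑ i ∈ Finset.range (m + 1), C (u i) * Qb ^ (s * i) := by
    rw [hP₀, Polynomial.map_sum]
    refine Finset.sum_congr rfl ?_
    intro i _
    rw [Polynomial.map_mul, Polynomial.map_pow, Polynomial.map_C, map_mul, map_pow]
  have hWW' : W (ιp (∑ i ∈ Finset.range (m + 1), C (u i) * Qb ^ (s * i)))
      = W' (ιp (∑ i ∈ Finset.range (m + 1), C (u i) * Qb ^ (s * i))) := by
    rw [← hmap, W_eq_omega hWω, ← W_eq_omega hW'ω]
  rw [hWW'] at hAbound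
  exact absurd (lt_of_lt_of_le hBbound hAbound) (lt_irrefl _)

end Stage1


section Stage23

variable {K : Type} [Field K] {Γ : Type} [AddCommGroup Γ] [LinearOrder Γ] [IsOrderedAddMonoid Γ]

local notation "K̄" => AlgebraicClosure K
local notation "ιp" => algebraMap (Polynomial (AlgebraicClosure K)) (RatFunc (AlgebraicClosure K))
local notation "φ" => algebraMap K (AlgebraicClosure K)

/-- Stage 2 (one direction): if the degrees agree then `γ ≤ γ'`. -/
theorem stage2dir {vbar : AddValuation K̄ (WithTop Γ)} {ω : AddValuation (RatFunc K) (WithTop Γ)}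
    {W W' : AddValuation (RatFunc (AlgebraicClosure K)) (WithTop Γ)}
    (hWω : Extends (liftRF K) ω W) (hW'ω : Extends (liftRF K) ω W')
    {a a' : K̄} {γ γ' : Γ}
    (hW : IsMinimalPairFor vbar W a γ) (hW' : IsMinimalPairFor vbar W' a' γ')
    (hnn : degOver K a = degOver K a') : γ ≤ γ' := by
  classical
  have hintA : IsIntegral K a := Algebra.IsIntegral.isIntegral a
  set Q : Polynomial K := minpoly K a with hQdef
  have hQne : Q ≠ 0 := minpoly.ne_zero hintA
  set Qb : Polynomial K̄ := Q.map φ with hQb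
  have hQbne : Qb ≠ 0 := (Polynomial.map_ne_zero_iff (algebraMap K K̄).injective).2 hQne
  have hQfin : W (ιp Qb) ≠ ⊤ := by
    rw [AddValuation.ne_top_iff]
    simpa using hQbne
  obtain ⟨i₀, hi₀le, hi₀⟩ := mv_exists hW.1 Qb
  -- the attaining index is positive
  have hc0 : (taylor a Qb).coeff 0 = 0 := by
    rw [taylor_coeff_zero, hQb, Polynomial.eval_map, ← Polynomial.aeval_def, minpoly.aeval]
  have hi₀1 : 1 ≤ i₀ := by
    by_contra hcon
    push_neg at hcon
    interval_cases i₀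
    rw [hc0, AddValuation.map_zero, top_add] at hi₀
    exact hQfin hi₀
  -- the attaining coefficient is nonzero
  have hcoefffin : vbar ((taylor a Qb).coeff i₀) ≠ ⊤ := by
    intro htop
    rw [htop, top_add] at hi₀
    exact hQfin hi₀
  have hcoeffne : (taylor a Qb).coeff i₀ ≠ 0 := (AddValuation.ne_top_iff vbar).1 hcoefffin
  -- the Hasse derivative is a nonzero polynomial over K of degree < deg a
  set p₀ : Polynomial K := Q.hasseDeriv i₀ with hp₀
  have hcoeffeq : (taylor a Qb).coeff i₀ = (p₀.map φ).eval a := taylor_coeff_map a Q i₀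
  have hp₀ne : p₀ ≠ 0 := by
    intro h0
    rw [hcoeffeq, h0] at hcoeffne
    simp at hcoeffne
  have hdeg : p₀.natDegree < degOver K a := by
    have h1 : p₀.natDegree ≤ Q.natDegree - i₀ := Polynomial.natDegree_hasseDeriv_le Q i₀
    have h2 : 1 ≤ Q.natDegree := minpoly.natDegree_pos hintA
    have h3 : Q.natDegree = degOver K a := rfl
    omega
  -- T1 on both sides
  obtain ⟨eA, _⟩ := T1 hW.1 hW.2 hp₀ne hdeg
  obtain ⟨eB, _⟩ := T1 hW'.1 hW'.2 hp₀ne (hnn ▸ hdeg)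
  have hvv : vbar ((p₀.map φ).eval a) = vbar ((p₀.map φ).eval a') := by
    rw [← eA, ← eB, W_eq_omega hWω, ← W_eq_omega hW'ω]
  -- compare the values of Q
  have hkey : W (ιp Qb) ≤ vbar ((taylor a Qb).coeff i₀) + i₀ • (γ' : WithTop Γ) := by
    have h1 : W (ιp Qb) = W' (ιp Qb) := by
      rw [hQb, W_eq_omega hWω, ← W_eq_omega hW'ω]
    rw [h1]
    have h2 := mv_le hW'.1 Qb i₀
    have h3 : (taylor a' Qb).coeff i₀ = (p₀.map φ).eval a' := taylor_coeff_map a' Q i₀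
    rw [h3, ← hvv, ← hcoeffeq] at h2
    exact h2
  rw [hi₀] at hkey
  have hkey2 : i₀ • (γ : WithTop Γ) ≤ i₀ • (γ' : WithTop Γ) := by
    have := hkey
    rw [add_comm (vbar ((taylor a Qb).coeff i₀)) (i₀ • (γ : WithTop Γ)),
      add_comm (vbar ((taylor a Qb).coeff i₀)) (i₀ • (γ' : WithTop Γ))] at this
    exact wcancel_le hcoefffin this
  rw [wsmul_coe, wsmul_coe, WithTop.coe_le_coe] at hkey2
  exact le_of_nsmul_le_nsmul_right (by omega) hkey2

/-- Stage 3: if the degrees agree then the values of the minimal polynomials agree. -/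
theorem stage3 {vbar : AddValuation K̄ (WithTop Γ)} {ω : AddValuation (RatFunc K) (WithTop Γ)}
    {W W' : AddValuation (RatFunc (AlgebraicClosure K)) (WithTop Γ)}
    (hWω : Extends (liftRF K) ω W) (hW'ω : Extends (liftRF K) ω W')
    {a a' : K̄} {γ γ' : Γ}
    (hW : IsMinimalPairFor vbar W a γ) (hW' : IsMinimalPairFor vbar W' a' γ')
    (hnn : degOver K a = degOver K a') :
    ω (algebraMap (Polynomial K) (RatFunc K) (minpoly K a)) =
      ω (algebraMap (Polynomial K) (RatFunc K) (minpoly K a')) := by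
  classical
  have hintA : IsIntegral K a := Algebra.IsIntegral.isIntegral a
  have hintA' : IsIntegral K a' := Algebra.IsIntegral.isIntegral a'
  set Q : Polynomial K := minpoly K a with hQdef
  set Q' : Polynomial K := minpoly K a' with hQ'def
  have hQne : Q ≠ 0 := minpoly.ne_zero hintA
  have hQ'ne : Q' ≠ 0 := minpoly.ne_zero hintA'
  by_cases hQQ : Q = Q'
  · rw [hQQ]
  -- the difference has degree < n
  have hdegeq : Q.degree = Q'.degree := by
    rw [Polynomial.degree_eq_natDegree hQne, Polynomial.degree_eq_natDegree hQ'ne]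
    exact_mod_cast hnn
  have hsub : Q - Q' ≠ 0 := sub_ne_zero.2 hQQ
  have hdeglt : (Q - Q').natDegree < degOver K a := by
    have h1 : (Q - Q').degree < Q.degree :=
      Polynomial.degree_sub_lt hdegeq hQne
        (by rw [(minpoly.monic hintA).leadingCoeff, (minpoly.monic hintA').leadingCoeff])
    have := Polynomial.natDegree_lt_natDegree hsub h1
    exact this
  -- T1 on both sides
  obtain ⟨eA, _⟩ := T1 hW.1 hW.2 hsub hdeglt
  obtain ⟨eB, _⟩ := T1 hW'.1 hW'.2 hsub (hnn ▸ hdeglt)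
  -- the evaluations
  have hmapsub : (Q - Q').map φ = Q.map φ - Q'.map φ := Polynomial.map_sub φ
  have hroota : (Q.map φ).eval a = 0 := by
    rw [Polynomial.eval_map, ← Polynomial.aeval_def, hQdef, minpoly.aeval]
  have hroota' : (Q'.map φ).eval a' = 0 := by
    rw [Polynomial.eval_map, ← Polynomial.aeval_def, hQ'def, minpoly.aeval]
  have hevA : ((Q - Q').map φ).eval a = -((Q'.map φ).eval a) := by
    rw [hmapsub, Polynomial.eval_sub, hroota, zero_sub]
  have hevB : ((Q - Q').map φ).eval a' = (Q.map φ).eval a' := by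
    rw [hmapsub, Polynomial.eval_sub, hroota', sub_zero]
  set h : WithTop Γ := ω (algebraMap (Polynomial K) (RatFunc K) (Q - Q')) with hh
  have hA : h = vbar ((Q'.map φ).eval a) := by
    rw [hh, ← W_eq_omega hWω, eA, hevA, AddValuation.map_neg]
  have hB : h = vbar ((Q.map φ).eval a') := by
    rw [hh, ← W_eq_omega hW'ω, eB, hevB]
  have hgeQ' : ω (algebraMap (Polynomial K) (RatFunc K) Q') ≤ h := by
    rw [hA, ← W_eq_omega hWω]
    exact mv_eval_le hW.1 (Q'.map φ)
  have hgeQ : ω (algebraMap (Polynomial K) (RatFunc K) Q) ≤ h := by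
    rw [hB, ← W_eq_omega hW'ω]
    exact mv_eval_le hW'.1 (Q.map φ)
  have hωQ'Q : ω (algebraMap (Polynomial K) (RatFunc K) (Q' - Q)) = h := by
    rw [hh]
    have hneg : (Q' - Q) = -(Q - Q') := by ring
    rw [hneg, map_neg, AddValuation.map_neg]
  have h1 : ω (algebraMap (Polynomial K) (RatFunc K) Q')
      ≤ ω (algebraMap (Polynomial K) (RatFunc K) Q) := by
    have hQsum : algebraMap (Polynomial K) (RatFunc K) Q
        = algebraMap (Polynomial K) (RatFunc K) Q'
          + algebraMap (Polynomial K) (RatFunc K) (Q - Q') := by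
      rw [← map_add]
      congr 1
      ring
    rw [hQsum]
    refine le_trans ?_ (AddValuation.map_add ω _ _)
    exact le_min le_rfl hgeQ'
  have h2 : ω (algebraMap (Polynomial K) (RatFunc K) Q)
      ≤ ω (algebraMap (Polynomial K) (RatFunc K) Q') := by
    have hQ'sum : algebraMap (Polynomial K) (RatFunc K) Q'
        = algebraMap (Polynomial K) (RatFunc K) Q
          + algebraMap (Polynomial K) (RatFunc K) (Q' - Q) := by
      rw [← map_add]
      congr 1
      ring
    rw [hQ'sum]
    refine le_trans ?_ (AddValuation.map_add ω _ _)
    refine le_min le_rfl ?_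
    rw [hωQ'Q]
    exact hgeQ
  exact le_antisymm h2 h1

end Stage23


section Core

variable {K : Type} [Field K] {Γ : Type} [AddCommGroup Γ] [LinearOrder Γ] [IsOrderedAddMonoid Γ]

theorem core {vbar : AddValuation (AlgebraicClosure K) (WithTop Γ)}
    {ω : AddValuation (RatFunc K) (WithTop Γ)}
    {W W' : AddValuation (RatFunc (AlgebraicClosure K)) (WithTop Γ)}
    (hWω : Extends (liftRF K) ω W) (hW'ω : Extends (liftRF K) ω W')
    {a a' : AlgebraicClosure K} {γ γ' : Γ}
    (hW : IsMinimalPairFor vbar W a γ) (hW' : IsMinimalPairFor vbar W' a' γ')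
    (hle : degOver K a ≤ degOver K a') :
    γ = γ' ∧ degOver K a = degOver K a' ∧
      ω (algebraMap (Polynomial K) (RatFunc K) (minpoly K a)) =
        ω (algebraMap (Polynomial K) (RatFunc K) (minpoly K a')) := by
  have hnn : degOver K a = degOver K a' := by
    rcases lt_or_eq_of_le hle with hlt | heq
    · exact absurd (stage1 hWω hW'ω hW hW' hlt) id
    · exact heq
  exact ⟨le_antisymm (stage2dir hWω hW'ω hW hW' hnn) (stage2dir hW'ω hWω hW' hW hnn.symm),
    hnn, stage3 hWω hW'ω hW hW' hnn⟩

end Core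

end Aux

/-- Lemma: two common extensions of `ω` have matching minimal pairs.
Let `ω` be a valuation transcendental extension of `ν` to `K(x)` and let `W = ω̄` and
`W' = ω̄′` be two common extensions of `ω` and `ν̄` to `K̄(x)` with minimal pairs of
definition `(a,γ)` and `(a',γ')`, with minimal polynomials `Q = minpoly K a` and
`Q' = minpoly K a'`.  Then `γ = γ'`, `deg Q = deg Q'` and `ωQ = ωQ'`. -/
theorem statement_11 {K : Type} [Field K] {Γ : Type} [AddCommGroup Γ] [LinearOrder Γ] [IsOrderedAddMonoid Γ]
    (vbar : AddValuation (AlgebraicClosure K) (WithTop Γ))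
    (ω : AddValuation (RatFunc K) (WithTop Γ))
    (hvt : IsValuationTranscendental (algebraMap K (RatFunc K)) ω)
    (W W' : AddValuation (RatFunc (AlgebraicClosure K)) (WithTop Γ))
    (hWω : Extends (liftRF K) ω W) (hW'ω : Extends (liftRF K) ω W')
    (a a' : AlgebraicClosure K) (γ γ' : Γ)
    (hW : IsMinimalPairFor vbar W a γ)
    (hW' : IsMinimalPairFor vbar W' a' γ') :
    γ = γ' ∧
    (minpoly K a).natDegree = (minpoly K a').natDegree ∧
    ω (algebraMap (Polynomial K) (RatFunc K) (minpoly K a)) =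
      ω (algebraMap (Polynomial K) (RatFunc K) (minpoly K a')) := by
  rcases le_total (degOver K a) (degOver K a') with hle | hle
  · obtain ⟨h1, h2, h3⟩ := core hWω hW'ω hW hW' hle
    exact ⟨h1, h2, h3⟩
  · obtain ⟨h1, h2, h3⟩ := core hW'ω hWω hW' hW hle
    exact ⟨h1.symm, h2.symm, h3.symm⟩

end VT
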